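/- Let γ : C → ℝ² be an embedding of a finite candidate set with |C| = m. The number of distinct linear orders v on C whose region R_γ(v) = ⋂_{a ≻_v b} H(a,b) is nonempty (where H(a,b) is the open half-plane of points strictly closer to γ(a) than to γ(b)) is at most m(3m−10)(m+1)(m−1)/24 + m(m−1) + 1. -/

import Mathlib

noncomputable section

abbrev Plane : Type := EuclideanSpace ℝ (Fin 2)

/-- The region of the ranking `σ` (position 0 is the most preferred): all points strictly
closer to `γ a` than to `γ b` whenever `σ` ranks `a` before `b`. -/
def region {C : Type*} {m : ℕ} (γ : C → Plane) (σ : C ≃ Fin m) : Set Plane :=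
  {p : Plane | ∀ a b : C, σ a < σ b → dist p (γ a) < dist p (γ b)}

open scoped RealInnerProductSpace
set_option maxHeartbeats 1600000
set_option linter.unusedVariables false
set_option linter.unusedSectionVars false

namespace S8

lemma inner2 (x y : Plane) : ⟪x, y⟫ = x 0 * y 0 + x 1 * y 1 := by
  simp [PiLp.inner_apply, RCLike.inner_apply, Fin.sum_univ_two, mul_comm]

def J : Plane → Plane := fun p => WithLp.toLp 2 (fun i => if i = 0 then -(p 1) else p 0)

lemma J0 (p : Plane) : J p 0 = -(p 1) := rfl
lemma J1 (p : Plane) : J p 1 = p 0 := rfl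

lemma skew (u x y : Plane) :
    ⟪J u, x⟫ * ⟪u, y⟫ - ⟪J u, y⟫ * ⟪u, x⟫ = ⟪u, u⟫ * (x 1 * y 0 - x 0 * y 1) := by
  simp only [inner2, J0, J1]; ring

/-- if both x and y are orthogonal to d ≠ 0 then cross(x,y)=0 -/
lemma cross_zero (d x y : Plane) (hd : d ≠ 0) (h1 : ⟪d, x⟫ = 0) (h2 : ⟪d, y⟫ = 0) :
    x 0 * y 1 - x 1 * y 0 = 0 := by
  rw [inner2] at h1 h2
  have hd' : d 0 ≠ 0 ∨ d 1 ≠ 0 := by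
    by_contra h
    push_neg at h
    apply hd
    ext i
    fin_cases i <;> simp [h.1, h.2]
  rcases hd' with h | h
  · have : d 0 * (x 0 * y 1 - x 1 * y 0) = 0 := by linear_combination y 1 * h1 - x 1 * h2
    rcases mul_eq_zero.mp this with h' | h'
    · exact absurd h' h
    · exact h'
  · have : d 1 * (x 0 * y 1 - x 1 * y 0) = 0 := by linear_combination - (y 0) * h1 + x 0 * h2
    rcases mul_eq_zero.mp this with h' | h'
    · exact absurd h' h
    · exact h'

lemma parallel_of_cross (x y : Plane) (hx : x ≠ 0) (h : x 0 * y 1 - x 1 * y 0 = 0) :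
    ∃ s : ℝ, y = s • x := by
  by_cases h0 : x 0 = 0
  · have h1 : x 1 ≠ 0 := by
      intro h1; apply hx; ext i; fin_cases i <;> simp [h0, h1] <;> rfl
    refine ⟨y 1 / x 1, ?_⟩
    ext i
    fin_cases i
    · show y 0 = (y 1 / x 1) * x 0
      rw [h0, mul_zero]
      have : x 1 * y 0 = 0 := by linear_combination -h + y 1 * h0
      rcases mul_eq_zero.mp this with h' | h'
      · exact absurd h' h1
      · exact h'
    · show y 1 = (y 1 / x 1) * x 1
      field_simp
  · refine ⟨y 0 / x 0, ?_⟩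
    ext i
    fin_cases i
    · show y 0 = (y 0 / x 0) * x 0
      field_simp
    · show y 1 = (y 0 / x 0) * x 1
      field_simp
      linear_combination h

section WithC
variable {C : Type*} [Fintype C] (γ : C → Plane)

def nvec (a b : C) : Plane := γ b - γ a
def cst (a b : C) : ℝ := (‖γ b‖ ^ 2 - ‖γ a‖ ^ 2) / 2

lemma nswap (a b : C) : nvec γ b a = - nvec γ a b := by simp [nvec]
lemma cswap (a b : C) : cst γ b a = - cst γ a b := by simp [cst]; ring

lemma nne (hγ : Function.Injective γ) {a b : C} (h : a ≠ b) : nvec γ a b ≠ 0 := by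
  show γ b - γ a ≠ 0
  exact sub_ne_zero.mpr fun hc => h (hγ hc).symm

lemma dist_lt_iff (p : Plane) (a b : C) :
    dist p (γ a) < dist p (γ b) ↔ ⟪p, nvec γ a b⟫ < cst γ a b := by
  rw [dist_eq_norm, dist_eq_norm]
  have h1 : ‖p - γ a‖ ^ 2 = ‖p‖ ^ 2 - 2 * ⟪p, γ a⟫ + ‖γ a‖ ^ 2 := norm_sub_sq_real p (γ a)
  have h2 : ‖p - γ b‖ ^ 2 = ‖p‖ ^ 2 - 2 * ⟪p, γ b⟫ + ‖γ b‖ ^ 2 := norm_sub_sq_real p (γ b)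
  have h3 : ⟪p, nvec γ a b⟫ = ⟪p, γ b⟫ - ⟪p, γ a⟫ := inner_sub_right _ _ _
  constructor
  · intro h
    have := pow_lt_pow_left₀ h (norm_nonneg _) (two_ne_zero)
    rw [cst]; linarith
  · intro h
    rw [cst] at h
    by_contra hc
    push_neg at hc
    have := pow_le_pow_left₀ (norm_nonneg _) hc 2
    linarith

lemma dist_eq_iff (p : Plane) (a b : C) :
    dist p (γ a) = dist p (γ b) ↔ ⟪p, nvec γ a b⟫ = cst γ a b := by
  rw [dist_eq_norm, dist_eq_norm]
  have h1 : ‖p - γ a‖ ^ 2 = ‖p‖ ^ 2 - 2 * ⟪p, γ a⟫ + ‖γ a‖ ^ 2 := norm_sub_sq_real p (γ a)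
  have h2 : ‖p - γ b‖ ^ 2 = ‖p‖ ^ 2 - 2 * ⟪p, γ b⟫ + ‖γ b‖ ^ 2 := norm_sub_sq_real p (γ b)
  have h3 : ⟪p, nvec γ a b⟫ = ⟪p, γ b⟫ - ⟪p, γ a⟫ := inner_sub_right _ _ _
  constructor
  · intro h
    rw [h] at h1
    rw [cst]; linarith
  · intro h
    rw [cst] at h
    have h4 : ‖p - γ a‖ ^ 2 = ‖p - γ b‖ ^ 2 := by linarith
    have h5 : (‖p - γ a‖ - ‖p - γ b‖) * (‖p - γ a‖ + ‖p - γ b‖) = 0 := by nlinarith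
    rcases mul_eq_zero.mp h5 with h' | h'
    · linarith
    · have := norm_nonneg (p - γ a); have := norm_nonneg (p - γ b); linarith

lemma mem_region_iff {m : ℕ} (σ : C ≃ Fin m) (p : Plane) :
    p ∈ region γ σ ↔ ∀ a b : C, σ a < σ b → ⟪p, nvec γ a b⟫ < cst γ a b := by
  constructor <;> intro h a b hab
  · exact (dist_lt_iff γ p a b).mp (h a b hab)
  · exact (dist_lt_iff γ p a b).mpr (h a b hab)

lemma region_open {m : ℕ} (σ : C ≃ Fin m) : IsOpen (region γ σ) := by
  have : region γ σ = ⋂ (a : C), ⋂ (b : C),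
      {p : Plane | σ a < σ b → ⟪p, nvec γ a b⟫ < cst γ a b} := by
    ext p
    simp only [Set.mem_iInter, Set.mem_setOf_eq]
    exact ⟨fun h a b hab => (dist_lt_iff γ p a b).mp (h a b hab),
      fun h a b hab => (dist_lt_iff γ p a b).mpr (h a b hab)⟩
  rw [this]
  refine isOpen_iInter_of_finite fun a => isOpen_iInter_of_finite fun b => ?_
  by_cases h : σ a < σ b
  · simp only [h, forall_true_left]
    exact isOpen_lt (Continuous.inner continuous_id continuous_const) continuous_const
  · simp only [h, false_implies, Set.setOf_true]
    exact isOpen_univ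

lemma closure_le {m : ℕ} (σ : C ≃ Fin m) {p : Plane} (hp : p ∈ closure (region γ σ))
    {a b : C} (hab : σ a < σ b) : ⟪p, nvec γ a b⟫ ≤ cst γ a b := by
  have hsub : closure (region γ σ) ⊆ {q : Plane | ⟪q, nvec γ a b⟫ ≤ cst γ a b} := by
    apply closure_minimal
    · intro q hq
      exact le_of_lt ((mem_region_iff γ σ q).mp hq a b hab)
    · exact isClosed_le (Continuous.inner continuous_id continuous_const) continuous_const
  exact hsub hp

/-- a point equidistant from three pairwise distinct points cannot exist twice -/
lemma triple_unique (hγ : Function.Injective γ) {a b c : C} (hab : a ≠ b) (hac : a ≠ c)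
    (hbc : b ≠ c) {v w : Plane}
    (hv1 : ⟪v, nvec γ a b⟫ = cst γ a b) (hv2 : ⟪v, nvec γ a c⟫ = cst γ a c)
    (hw1 : ⟪w, nvec γ a b⟫ = cst γ a b) (hw2 : ⟪w, nvec γ a c⟫ = cst γ a c) :
    v = w := by
  by_contra hvw
  have hd : v - w ≠ 0 := sub_ne_zero_of_ne hvw
  have h1 : ⟪v - w, nvec γ a b⟫ = 0 := by rw [inner_sub_left]; rw [hv1, hw1]; ring
  have h2 : ⟪v - w, nvec γ a c⟫ = 0 := by rw [inner_sub_left]; rw [hv2, hw2]; ring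
  have hcross := cross_zero (v - w) _ _ hd h1 h2
  obtain ⟨s, hs⟩ := parallel_of_cross _ _ (nne γ hγ hab) hcross
  -- γ c = γ a + s • (γ b - γ a)
  have hgc : γ c = γ a + s • nvec γ a b :=
    sub_eq_iff_eq_add'.mp (show γ c - γ a = s • nvec γ a b from hs)
  have hgb : γ b = γ a + nvec γ a b :=
    sub_eq_iff_eq_add'.mp (show γ b - γ a = nvec γ a b from rfl)
  have hs0 : s ≠ 0 := by
    intro h0
    rw [h0, zero_smul, add_zero] at hgc
    exact hac (hγ hgc.symm)
  have hnorm : ‖nvec γ a b‖ ≠ 0 := norm_ne_zero_iff.mpr (nne γ hγ hab)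
  -- expand the two equalities
  have e1 : ⟪v, nvec γ a b⟫ = ⟪γ a, nvec γ a b⟫ + ‖nvec γ a b‖ ^ 2 / 2 := by
    rw [hv1, cst, hgb]
    have : ‖γ a + nvec γ a b‖ ^ 2 = ‖γ a‖ ^ 2 + 2 * ⟪γ a, nvec γ a b⟫ + ‖nvec γ a b‖ ^ 2 :=
      norm_add_sq_real _ _
    rw [this]; ring
  have e2 : s * ⟪v, nvec γ a b⟫ = s * ⟪γ a, nvec γ a b⟫ + s ^ 2 * ‖nvec γ a b‖ ^ 2 / 2 := by
    have h2' : ⟪v, nvec γ a c⟫ = s * ⟪v, nvec γ a b⟫ := by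
      rw [hs, real_inner_smul_right]
    have h2'' : cst γ a c = s * ⟪γ a, nvec γ a b⟫ + s ^ 2 * ‖nvec γ a b‖ ^ 2 / 2 := by
      rw [cst, hgc]
      have : ‖γ a + s • nvec γ a b‖ ^ 2
          = ‖γ a‖ ^ 2 + 2 * ⟪γ a, s • nvec γ a b⟫ + ‖s • nvec γ a b‖ ^ 2 := norm_add_sq_real _ _
      rw [this, real_inner_smul_right, norm_smul]
      simp [mul_pow]
      ring
    rw [← h2', ← h2'', hv2]
  have hs1 : s = 1 := by
    have : s * (1 - s) * ‖nvec γ a b‖ ^ 2 = 0 := by linear_combination 2 * e2 - 2 * s * e1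
    rcases mul_eq_zero.mp this with h' | h'
    · rcases mul_eq_zero.mp h' with h'' | h''
      · exact absurd h'' hs0
      · linarith
    · exact absurd h' (pow_ne_zero 2 hnorm)
  apply hbc
  apply hγ
  rw [hgc, hs1, one_smul, ← hgb]

end WithC

lemma exists_coord_ne (x : Plane) (hx : x ≠ 0) : x 0 ≠ 0 ∨ x 1 ≠ 0 := by
  by_contra h
  push_neg at h
  apply hx
  ext i
  fin_cases i <;> simp [h.1, h.2]

section WithC
variable {C : Type*} [Fintype C] (γ : C → Plane)

lemma exists_generic (hγ : Function.Injective γ) :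
    ∃ u : Plane, ⟪u, u⟫ = 1 ∧ ∀ a b : C, a ≠ b → ⟪J u, nvec γ a b⟫ ≠ 0 := by
  classical
  obtain ⟨t, ht⟩ := Infinite.exists_notMem_finset
    ((Finset.univ : Finset (C × C)).image fun p => nvec γ p.1 p.2 1 / nvec γ p.1 p.2 0)
  have hpos : (0:ℝ) < 1 + t ^ 2 := by positivity
  set c : ℝ := (Real.sqrt (1 + t ^ 2))⁻¹ with hc
  have hsq : Real.sqrt (1 + t ^ 2) ^ 2 = 1 + t ^ 2 := Real.sq_sqrt (le_of_lt hpos)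
  have hspos : 0 < Real.sqrt (1 + t ^ 2) := Real.sqrt_pos.mpr hpos
  have hcne : c ≠ 0 := inv_ne_zero (ne_of_gt hspos)
  have hcsq : c ^ 2 * (1 + t ^ 2) = 1 := by
    rw [hc, inv_pow, hsq]
    field_simp
  have huu : (WithLp.toLp 2 ![c, c * t] : Plane) 0 = c := rfl
  have huu1 : (WithLp.toLp 2 ![c, c * t] : Plane) 1 = c * t := rfl
  refine ⟨WithLp.toLp 2 ![c, c * t], ?_, ?_⟩
  · rw [inner2, huu, huu1]
    nlinarith [hcsq]
  · intro a b hab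
    have hn := nne γ hγ hab
    rw [inner2, J0, J1, huu, huu1]
    set n0 := nvec γ a b 0
    set n1 := nvec γ a b 1
    intro hzero
    have hkey : n1 - t * n0 = 0 := by
      have hcc : c * (n1 - t * n0) = 0 := by linear_combination hzero
      rcases mul_eq_zero.mp hcc with h | h
      · exact absurd h hcne
      · exact h
    by_cases h0 : n0 = 0
    · rcases exists_coord_ne _ hn with h | h
      · exact h h0
      · apply h; rw [← hkey, h0]; ring
    · apply ht
      rw [Finset.mem_image]
      refine ⟨(a, b), Finset.mem_univ _, ?_⟩
      show n1 / n0 = t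
      field_simp
      linear_combination hkey

variable (u : Plane)

def psi (p : Plane) : ℝ := ⟪p, u⟫
def phi (p : Plane) : ℝ := ⟪p, J u⟫
def alf (a b : C) : ℝ := ⟪J u, nvec γ a b⟫
def bef (a b : C) : ℝ := ⟪u, nvec γ a b⟫
def xval (a b : C) : ℝ := - bef γ u a b / alf γ u a b

lemma alf_swap (a b : C) : alf γ u b a = - alf γ u a b := by
  rw [alf, alf, nswap, inner_neg_right]
lemma bef_swap (a b : C) : bef γ u b a = - bef γ u a b := by
  rw [bef, bef, nswap, inner_neg_right]
lemma xval_swap (a b : C) : xval γ u b a = xval γ u a b := by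
  rw [xval, xval, alf_swap, bef_swap, neg_neg, div_neg, neg_div]

variable {u}
variable (hu : ⟪u, u⟫ = 1)

section HU
include hu

lemma psi_u : psi u u = 1 := hu
lemma psi_Ju : psi u (J u) = 0 := by rw [psi, inner2, J0, J1]; ring

lemma decomp (p : Plane) : p = phi u p • J u + psi u p • u := by
  have h : u 0 * u 0 + u 1 * u 1 = 1 := by rw [← inner2]; exact hu
  ext i
  have hadd : ∀ (x y : Plane) (j : Fin 2), (x + y) j = x j + y j := fun _ _ _ => rfl
  have hsmul : ∀ (r : ℝ) (x : Plane) (j : Fin 2), (r • x) j = r * x j := fun _ _ _ => rfl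
  fin_cases i
  · show p 0 = (phi u p • J u + psi u p • u) 0
    rw [hadd, hsmul, hsmul, phi, psi, inner2, inner2, J0, J1]
    linear_combination (-(p 0)) * h
  · show p 1 = (phi u p • J u + psi u p • u) 1
    rw [hadd, hsmul, hsmul, phi, psi, inner2, inner2, J0, J1]
    linear_combination (-(p 1)) * h

lemma expand (p x : Plane) : ⟪p, x⟫ = phi u p * ⟪J u, x⟫ + psi u p * ⟪u, x⟫ := by
  have h : u 0 * u 0 + u 1 * u 1 = 1 := by rw [← inner2]; exact hu
  rw [phi, psi]
  simp only [inner2, J0, J1]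
  linear_combination (-(p 0 * x 0 + p 1 * x 1)) * h

lemma norm_u : ‖u‖ = 1 := by
  have := real_inner_self_eq_norm_mul_norm u
  rw [hu] at this
  nlinarith [norm_nonneg u]

lemma norm_Ju : ‖J u‖ = 1 := by
  have h : u 0 * u 0 + u 1 * u 1 = 1 := by rw [← inner2]; exact hu
  have h1 : ⟪J u, J u⟫ = 1 := by rw [inner2, J0, J1]; linear_combination h
  have := real_inner_self_eq_norm_mul_norm (J u)
  rw [h1] at this
  nlinarith [norm_nonneg (J u)]

lemma norm_le (p : Plane) : ‖p‖ ≤ |phi u p| + |psi u p| := by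
  conv_lhs => rw [decomp hu p]
  refine le_trans (norm_add_le _ _) ?_
  rw [norm_smul, norm_smul, norm_Ju hu, norm_u hu]
  simp [Real.norm_eq_abs]

/-- two points on two non-parallel lines coincide; non-parallelism from distinct xval -/
lemma sameline (hγ : Function.Injective γ)
    (hgen : ∀ a b : C, a ≠ b → alf γ u a b ≠ 0)
    {a b c d : C} (hab : a ≠ b) (hcd : c ≠ d) {v w : Plane}
    (hv1 : ⟪v, nvec γ a b⟫ = cst γ a b) (hw1 : ⟪w, nvec γ a b⟫ = cst γ a b)
    (hv2 : ⟪v, nvec γ c d⟫ = cst γ c d) (hw2 : ⟪w, nvec γ c d⟫ = cst γ c d)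
    (hx : xval γ u a b ≠ xval γ u c d) : v = w := by
  by_contra hvw
  apply hx
  have hd : v - w ≠ 0 := sub_ne_zero_of_ne hvw
  have h1 : ⟪v - w, nvec γ a b⟫ = 0 := by rw [inner_sub_left, hv1, hw1]; ring
  have h2 : ⟪v - w, nvec γ c d⟫ = 0 := by rw [inner_sub_left, hv2, hw2]; ring
  have hcross := cross_zero (v - w) _ _ hd h1 h2
  have hskew := skew u (nvec γ a b) (nvec γ c d)
  rw [hu] at hskew
  have hkey : alf γ u a b * bef γ u c d - alf γ u c d * bef γ u a b = 0 := by
    rw [alf, alf, bef, bef]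
    linear_combination hskew - hcross
  rw [xval, xval, div_eq_div_iff (hgen a b hab) (hgen c d hcd)]
  linear_combination hkey

end HU

/-- distinct rankings disagree on some ordered pair -/
lemma diffpair {m : ℕ} {σ σ' : C ≃ Fin m} (h : σ ≠ σ') :
    ∃ a b : C, σ a < σ b ∧ σ' b < σ' a := by
  by_contra hc
  push_neg at hc
  have himp : ∀ a b : C, σ a < σ b → σ' a < σ' b := by
    intro a b hab
    have hne : a ≠ b := fun he => lt_irrefl _ (he ▸ hab)
    rcases lt_or_gt_of_ne (fun he : σ' a = σ' b => hne (σ'.injective he)) with h' | h'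
    · exact h'
    · exact absurd h' (not_lt.mpr (hc a b hab))
  have himp' : ∀ a b : C, σ' a < σ' b → σ a < σ b := by
    intro a b hab
    rcases lt_trichotomy (σ a) (σ b) with h' | h' | h'
    · exact h'
    · exact absurd hab (by rw [σ.injective h']; exact lt_irrefl _)
    · exact absurd (himp b a h') (asymm hab)
  apply h
  have hle : ∀ (g : Fin m → Fin m), StrictMono g → ∀ i, i ≤ g i := by
    intro g hg
    have H : ∀ k (i : Fin m), i.val ≤ k → i ≤ g i := by
      intro k
      induction k with
      | zero =>
        intro i hi
        rw [Fin.le_def]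
        omega
      | succ n IH =>
        intro i hi
        rcases Nat.lt_or_ge i.val (n + 1) with h' | h'
        · exact IH i (by omega)
        · have hival : i.val = n + 1 := by omega
          have hnlt : n < m := by have := i.isLt; omega
          have hji : (⟨n, hnlt⟩ : Fin m) < i := by rw [Fin.lt_def]; simp; omega
          have h1 := hg hji
          have h2 := IH ⟨n, hnlt⟩ (by simp)
          rw [Fin.le_def] at h2 ⊢
          rw [Fin.lt_def] at h1
          simp at h2
          omega
    exact fun i => H i.val i le_rfl
  have hg : StrictMono (fun i => σ' (σ.symm i)) := by
    intro i j hij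
    apply himp
    simpa using hij
  have hg' : StrictMono (fun i => σ (σ'.symm i)) := by
    intro i j hij
    apply himp'
    simpa using hij
  apply Equiv.ext
  intro a
  have h1 := hle _ hg (σ a)
  have h2 := hle _ hg' (σ' a)
  simp only [Equiv.symm_apply_apply] at h1 h2
  exact le_antisymm h1 h2

end WithC

lemma exists_gt_bound {α : Type*} [Fintype α] (f : α → ℝ) : ∃ X : ℝ, ∀ a, f a < X := by
  refine ⟨1 + ∑ a, |f a|, fun a => ?_⟩
  have h1 := Finset.single_le_sum (f := fun a => |f a|) (fun i _ => abs_nonneg (f i))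
    (Finset.mem_univ a)
  have h2 := le_abs_self (f a)
  linarith

lemma exists_pos_le {α : Type*} [Fintype α] (P : α → Prop) (f : α → ℝ)
    (hf : ∀ a, P a → 0 < f a) : ∃ ε : ℝ, 0 < ε ∧ ∀ a, P a → ε ≤ f a := by
  classical
  set F := insert (1:ℝ) ((Finset.univ.filter P).image f) with hF
  have hFne : F.Nonempty := ⟨1, Finset.mem_insert_self _ _⟩
  refine ⟨F.min' hFne, ?_, ?_⟩
  · rw [Finset.lt_min'_iff]
    intro y hy
    rw [hF] at hy
    rcases Finset.mem_insert.mp hy with h | h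
    · rw [h]; norm_num
    · obtain ⟨e, he, hval⟩ := Finset.mem_image.mp h
      rw [Finset.mem_filter] at he
      rw [← hval]
      exact hf e he.2
  · intro a ha
    apply F.min'_le
    rw [hF]
    exact Finset.mem_insert_of_mem (Finset.mem_image_of_mem f (by simp [ha]))

lemma exists_max_on {α : Type*} [Fintype α] (P : α → Prop) (f : α → ℝ) (h : ∃ a, P a) :
    ∃ a, P a ∧ ∀ b, P b → f b ≤ f a := by
  classical
  obtain ⟨a, ha⟩ := h
  obtain ⟨b, hb, hmax⟩ := Finset.exists_max_image (Finset.univ.filter P) f ⟨a, by simp [ha]⟩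
  exact ⟨b, (Finset.mem_filter.mp hb).2, fun c hc => hmax c (by simp [hc])⟩

lemma exists_min_on {α : Type*} [Fintype α] (P : α → Prop) (f : α → ℝ) (h : ∃ a, P a) :
    ∃ a, P a ∧ ∀ b, P b → f a ≤ f b := by
  classical
  obtain ⟨a, ha⟩ := h
  obtain ⟨b, hb, hmin⟩ := Finset.exists_min_image (Finset.univ.filter P) f ⟨a, by simp [ha]⟩
  exact ⟨b, (Finset.mem_filter.mp hb).2, fun c hc => hmin c (by simp [hc])⟩

section WithC
variable {C : Type*} [Fintype C] (γ : C → Plane) {u : Plane}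

lemma alf_eq (a b : C) : alf γ u a b = ⟪J u, nvec γ a b⟫ := rfl
lemma bef_eq (a b : C) : bef γ u a b = ⟪u, nvec γ a b⟫ := rfl
lemma psi_eq (p : Plane) : psi u p = ⟪p, u⟫ := rfl

lemma psi_cont (u : Plane) : Continuous (psi u) :=
  Continuous.inner continuous_id continuous_const

/-- no region that is bounded below can have all its constraints pointing one way
    along a horizontal direction -/
lemma nosided {m : ℕ} (σ : C ≃ Fin m) (hu : ⟪u, u⟫ = 1) {y₀ : ℝ}
    (hy₀ : ∀ p ∈ region γ σ, y₀ ≤ psi u p) (w : Plane) (hw : psi u w = 0)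
    (hlt : ∀ a b : C, σ a < σ b → ⟪w, nvec γ a b⟫ < 0) : False := by
  classical
  set Y := y₀ - 1 with hY
  obtain ⟨X, hX⟩ := exists_gt_bound
    (fun e : C × C => (cst γ e.1 e.2 - ⟪u, nvec γ e.1 e.2⟫ * Y) / ⟪w, nvec γ e.1 e.2⟫)
  have hmem : X • w + Y • u ∈ region γ σ := by
    rw [mem_region_iff]
    intro a b hab
    have hW : ⟪w, nvec γ a b⟫ < 0 := hlt a b hab
    have hXge : (cst γ a b - ⟪u, nvec γ a b⟫ * Y) / ⟪w, nvec γ a b⟫ < X := hX (a, b)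
    have hmul : X * ⟪w, nvec γ a b⟫ < cst γ a b - ⟪u, nvec γ a b⟫ * Y := by
      have := mul_lt_mul_of_neg_right hXge hW
      rwa [div_mul_cancel₀ _ (ne_of_lt hW)] at this
    have hzn : ⟪X • w + Y • u, nvec γ a b⟫
        = X * ⟪w, nvec γ a b⟫ + Y * ⟪u, nvec γ a b⟫ := by
      rw [inner_add_left, real_inner_smul_left, real_inner_smul_left]
    rw [hzn]; linarith
  have hpsiz : psi u (X • w + Y • u) = Y := by
    rw [psi_eq, inner_add_left, real_inner_smul_left, real_inner_smul_left]
    have h1 : ⟪w, u⟫ = 0 := hw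
    rw [h1, hu]; ring
  have := hy₀ _ hmem
  rw [hpsiz, hY] at this
  linarith

lemma keydata {m : ℕ} (σ : C ≃ Fin m) (hγ : Function.Injective γ) (hu : ⟪u, u⟫ = 1)
    (hgen : ∀ a b : C, a ≠ b → alf γ u a b ≠ 0)
    (hne : (region γ σ).Nonempty)
    (hbdd : ∃ y₀ : ℝ, ∀ p ∈ region γ σ, y₀ ≤ psi u p) :
    ∃ (v : Plane) (a₁ b₁ a₂ b₂ : C),
      (∀ p ∈ region γ σ, psi u v < psi u p) ∧
      (∀ a b : C, σ a < σ b → ⟪v, nvec γ a b⟫ ≤ cst γ a b) ∧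
      σ a₁ < σ b₁ ∧ ⟪v, nvec γ a₁ b₁⟫ = cst γ a₁ b₁ ∧
      σ a₂ < σ b₂ ∧ ⟪v, nvec γ a₂ b₂⟫ = cst γ a₂ b₂ ∧
      xval γ u a₁ b₁ < xval γ u a₂ b₂ ∧
      (∀ x : ℝ, xval γ u a₁ b₁ < x → x < xval γ u a₂ b₂ →
        ∀ a b : C, σ a < σ b → ⟪v, nvec γ a b⟫ = cst γ a b →
          alf γ u a b * x + bef γ u a b < 0) := by
  classical
  obtain ⟨p₀, hp₀⟩ := hne
  obtain ⟨y₀, hy₀⟩ := hbdd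
  have hσne : ∀ {a b : C}, σ a < σ b → a ≠ b := by
    intro a b hab he
    exact lt_irrefl _ (he ▸ hab)
  set Q := closure (region γ σ) ∩ {p : Plane | psi u p ≤ psi u p₀} with hQ
  have hQne : p₀ ∈ Q := ⟨subset_closure hp₀, show psi u p₀ ≤ psi u p₀ from le_rfl⟩
  have hQclosed : IsClosed Q :=
    isClosed_closure.inter (isClosed_le (psi_cont u) continuous_const)
  have hlowcl : ∀ p ∈ closure (region γ σ), y₀ ≤ psi u p := by
    intro p hp
    have hsub : closure (region γ σ) ⊆ {p : Plane | y₀ ≤ psi u p} :=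
      closure_minimal (fun q hq => hy₀ q hq) (isClosed_le continuous_const (psi_cont u))
    exact hsub hp
  set K := |psi u p₀| + |y₀| with hK
  have hKpsi : ∀ p ∈ Q, |psi u p| ≤ K := by
    intro p hp
    have h1 := hlowcl p hp.1
    have h2 : psi u p ≤ psi u p₀ := hp.2
    rw [hK, abs_le]
    constructor
    · have := neg_abs_le y₀; have := abs_nonneg (psi u p₀); linarith
    · have := le_abs_self (psi u p₀); have := abs_nonneg y₀; linarith
  -- φ bounded above on Q
  have hup : ∃ M : ℝ, ∀ p ∈ Q, phi u p ≤ M := by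
    by_contra hcon
    push_neg at hcon
    have hneg : ∀ a b : C, σ a < σ b → alf γ u a b < 0 := by
      intro a b hab
      rcases (hgen a b (hσne hab)).lt_or_gt with h | h
      · exact h
      · exfalso
        obtain ⟨p, hpQ, hp⟩ :=
          hcon ((|cst γ a b| + |bef γ u a b| * K) / alf γ u a b)
        have h1 : ⟪p, nvec γ a b⟫ ≤ cst γ a b := closure_le γ σ hpQ.1 hab
        have h2 : ⟪p, nvec γ a b⟫
            = phi u p * alf γ u a b + psi u p * bef γ u a b := by
          rw [alf_eq, bef_eq]; exact expand hu p (nvec γ a b)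
        have h3 : |cst γ a b| + |bef γ u a b| * K < phi u p * alf γ u a b :=
          (div_lt_iff₀ h).mp hp
        have hpsiK := hKpsi p hpQ
        have h4 : -( |bef γ u a b| * K) ≤ psi u p * bef γ u a b := by
          have ha := abs_mul (psi u p) (bef γ u a b)
          have hb := neg_abs_le (psi u p * bef γ u a b)
          have hc : |psi u p| * |bef γ u a b| ≤ K * |bef γ u a b| :=
            mul_le_mul_of_nonneg_right hpsiK (abs_nonneg _)
          nlinarith
        have h5 := le_abs_self (cst γ a b)
        rw [h2] at h1
        linarith
    exact nosided γ σ hu hy₀ (J u) (psi_Ju hu)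
      (fun a b hab => by rw [← alf_eq]; exact hneg a b hab)
  have hdown : ∃ M : ℝ, ∀ p ∈ Q, -M ≤ phi u p := by
    by_contra hcon
    push_neg at hcon
    have hpos : ∀ a b : C, σ a < σ b → 0 < alf γ u a b := by
      intro a b hab
      rcases (hgen a b (hσne hab)).lt_or_gt with h | h
      swap
      · exact h
      · exfalso
        obtain ⟨p, hpQ, hp⟩ :=
          hcon (-((|cst γ a b| + |bef γ u a b| * K) / alf γ u a b))
        rw [neg_neg] at hp
        have h1 : ⟪p, nvec γ a b⟫ ≤ cst γ a b := closure_le γ σ hpQ.1 hab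
        have h2 : ⟪p, nvec γ a b⟫
            = phi u p * alf γ u a b + psi u p * bef γ u a b := by
          rw [alf_eq, bef_eq]; exact expand hu p (nvec γ a b)
        have h3 : |cst γ a b| + |bef γ u a b| * K < phi u p * alf γ u a b := by
          have hmm := mul_lt_mul_of_neg_right hp h
          rwa [div_mul_cancel₀ _ (ne_of_lt h)] at hmm
        have hpsiK := hKpsi p hpQ
        have h4 : -( |bef γ u a b| * K) ≤ psi u p * bef γ u a b := by
          have ha := abs_mul (psi u p) (bef γ u a b)
          have hb := neg_abs_le (psi u p * bef γ u a b)
          have hc : |psi u p| * |bef γ u a b| ≤ K * |bef γ u a b| :=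
            mul_le_mul_of_nonneg_right hpsiK (abs_nonneg _)
          nlinarith
        have h5 := le_abs_self (cst γ a b)
        rw [h2] at h1
        linarith
    exact nosided γ σ hu hy₀ (-(J u)) (by rw [psi_eq, inner_neg_left, ← psi_eq, psi_Ju hu]; ring)
      (fun a b hab => by
        rw [inner_neg_left]
        have := hpos a b hab
        rw [alf_eq] at this
        linarith)
  obtain ⟨M₁, hM₁⟩ := hup
  obtain ⟨M₂, hM₂⟩ := hdown
  have hsub : Q ⊆ Metric.closedBall 0 (max M₁ M₂ + K) := by
    intro p hp
    rw [Metric.mem_closedBall, dist_zero_right]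
    have h1 := norm_le hu p
    have h2 : |phi u p| ≤ max M₁ M₂ := by
      rw [abs_le]
      constructor
      · have := hM₂ p hp; have := le_max_right M₁ M₂; linarith
      · have := hM₁ p hp; have := le_max_left M₁ M₂; linarith
    have h3 := hKpsi p hp
    linarith
  have hQcomp : IsCompact Q :=
    (isCompact_closedBall 0 _).of_isClosed_subset hQclosed hsub
  obtain ⟨v, hvQ, hvmin'⟩ := hQcomp.exists_isMinOn ⟨p₀, hQne⟩ ((psi_cont u).continuousOn)
  have hvmin : ∀ p ∈ Q, psi u v ≤ psi u p := fun p hp => hvmin' hp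
  -- (i) strict minimality on the open region
  have hstrict : ∀ p ∈ region γ σ, psi u v < psi u p := by
    intro p hp
    obtain ⟨ε, hε, hball⟩ := Metric.isOpen_iff.mp (region_open γ σ) p hp
    have hp' : p - (ε / 2) • u ∈ region γ σ := by
      apply hball
      rw [Metric.mem_ball, dist_eq_norm]
      have heq : p - (ε / 2) • u - p = -((ε / 2) • u) := by abel
      rw [heq, norm_neg, norm_smul, norm_u hu]
      simp only [Real.norm_eq_abs, mul_one]
      rw [abs_of_pos (by linarith)]
      linarith
    have hpsival : psi u (p - (ε / 2) • u) = psi u p - ε / 2 := by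
      rw [psi_eq, inner_sub_left, real_inner_smul_left, hu, ← psi_eq]; ring
    by_cases hcmp : psi u (p - (ε / 2) • u) ≤ psi u p₀
    · have hmem : p - (ε / 2) • u ∈ Q := ⟨subset_closure hp', hcmp⟩
      have := hvmin _ hmem
      rw [hpsival] at this
      linarith
    · push_neg at hcmp
      have := hvmin p₀ hQne
      rw [hpsival] at hcmp
      linarith
  have hvcl : v ∈ closure (region γ σ) := hvQ.1
  have hle : ∀ a b : C, σ a < σ b → ⟪v, nvec γ a b⟫ ≤ cst γ a b :=
    fun a b hab => closure_le γ σ hvcl hab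
  -- K1
  have K1 : ∀ w : Plane,
      (∀ a b : C, σ a < σ b → ⟪v, nvec γ a b⟫ = cst γ a b → ⟪w, nvec γ a b⟫ < 0) →
      0 < psi u w := by
    intro w hw
    obtain ⟨ε, hεpos, hεle⟩ := exists_pos_le
      (fun e : C × C => σ e.1 < σ e.2 ∧ ⟪v, nvec γ e.1 e.2⟫ ≠ cst γ e.1 e.2)
      (fun e => (cst γ e.1 e.2 - ⟪v, nvec γ e.1 e.2⟫) / (1 + |⟪w, nvec γ e.1 e.2⟫|))
      (by
        intro e he
        have h1 : ⟪v, nvec γ e.1 e.2⟫ < cst γ e.1 e.2 :=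
          lt_of_le_of_ne (hle e.1 e.2 he.1) he.2
        have h2 : (0:ℝ) < 1 + |⟪w, nvec γ e.1 e.2⟫| := by
          have := abs_nonneg (⟪w, nvec γ e.1 e.2⟫ : ℝ); linarith
        exact div_pos (by linarith) h2)
    have hmem : v + ε • w ∈ region γ σ := by
      rw [mem_region_iff]
      intro a b hab
      have hzn : ⟪v + ε • w, nvec γ a b⟫ = ⟪v, nvec γ a b⟫ + ε * ⟪w, nvec γ a b⟫ := by
        rw [inner_add_left, real_inner_smul_left]
      rw [hzn]
      by_cases hS : ⟪v, nvec γ a b⟫ = cst γ a b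
      · have := hw a b hab hS
        nlinarith
      · have h0 := hεle (a, b) ⟨hab, hS⟩
        have hden : (0:ℝ) < 1 + |⟪w, nvec γ a b⟫| := by
          have := abs_nonneg (⟪w, nvec γ a b⟫ : ℝ); linarith
        have h1 : ε * (1 + |⟪w, nvec γ a b⟫|) ≤ cst γ a b - ⟪v, nvec γ a b⟫ :=
          (le_div_iff₀ hden).mp h0
        have h2 : ε * ⟪w, nvec γ a b⟫ ≤ ε * |⟪w, nvec γ a b⟫| :=
          mul_le_mul_of_nonneg_left (le_abs_self _) (le_of_lt hεpos)
        nlinarith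
    have hst := hstrict _ hmem
    have hpsival : psi u (v + ε • w) = psi u v + ε * psi u w := by
      rw [psi_eq, inner_add_left, real_inner_smul_left, ← psi_eq, ← psi_eq]
    rw [hpsival] at hst
    nlinarith
  -- K2 : a point in the interval
  set x₀ := phi u (p₀ - v) / psi u (p₀ - v) with hx₀def
  have hw0 : ∀ a b : C, σ a < σ b → ⟪v, nvec γ a b⟫ = cst γ a b →
      ⟪p₀ - v, nvec γ a b⟫ < 0 := by
    intro a b hab hS
    rw [inner_sub_left, hS]
    have := (mem_region_iff γ σ p₀).mp hp₀ a b hab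
    linarith
  have hψ0 : 0 < psi u (p₀ - v) := K1 _ hw0
  have hx₀ : ∀ a b : C, σ a < σ b → ⟪v, nvec γ a b⟫ = cst γ a b →
      alf γ u a b * x₀ + bef γ u a b < 0 := by
    intro a b hab hS
    have h2 : ⟪p₀ - v, nvec γ a b⟫
        = phi u (p₀ - v) * alf γ u a b + psi u (p₀ - v) * bef γ u a b := by
      rw [alf_eq, bef_eq]; exact expand hu _ (nvec γ a b)
    have h3 := hw0 a b hab hS
    have h4 : alf γ u a b * x₀ + bef γ u a b = ⟪p₀ - v, nvec γ a b⟫ / psi u (p₀ - v) := by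
      rw [h2, hx₀def]
      field_simp
    rw [h4]
    exact div_neg_of_neg_of_pos h3 hψ0
  -- active constraints with negative / positive slope
  set Pneg := fun e : C × C => (σ e.1 < σ e.2 ∧ ⟪v, nvec γ e.1 e.2⟫ = cst γ e.1 e.2)
    ∧ alf γ u e.1 e.2 < 0 with hPneg
  set Ppos := fun e : C × C => (σ e.1 < σ e.2 ∧ ⟪v, nvec γ e.1 e.2⟫ = cst γ e.1 e.2)
    ∧ 0 < alf γ u e.1 e.2 with hPpos
  have hSnegne : ∃ e, Pneg e := by
    by_contra hcon
    push_neg at hcon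
    have hallpos : ∀ a b : C, σ a < σ b → ⟪v, nvec γ a b⟫ = cst γ a b →
        0 < alf γ u a b := by
      intro a b hab hS
      rcases (hgen a b (hσne hab)).lt_or_gt with h | h
      · exact absurd ⟨⟨hab, hS⟩, h⟩ (hcon (a, b))
      · exact h
    have := K1 (-(J u)) (fun a b hab hS => by
      rw [inner_neg_left]
      have := hallpos a b hab hS
      rw [alf_eq] at this
      linarith)
    rw [psi_eq, inner_neg_left, ← psi_eq, psi_Ju hu] at this
    linarith
  have hSposne : ∃ e, Ppos e := by
    by_contra hcon
    push_neg at hcon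
    have hallneg : ∀ a b : C, σ a < σ b → ⟪v, nvec γ a b⟫ = cst γ a b →
        alf γ u a b < 0 := by
      intro a b hab hS
      rcases (hgen a b (hσne hab)).lt_or_gt with h | h
      · exact h
      · exact absurd ⟨⟨hab, hS⟩, h⟩ (hcon (a, b))
    have := K1 (J u) (fun a b hab hS => by
      have := hallneg a b hab hS
      rw [alf_eq] at this
      exact this)
    rw [psi_Ju hu] at this
    linarith
  obtain ⟨e₁, he₁, he₁max⟩ := exists_max_on Pneg (fun e => xval γ u e.1 e.2) hSnegne
  obtain ⟨e₂, he₂, he₂min⟩ := exists_min_on Ppos (fun e => xval γ u e.1 e.2) hSposne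
  have hxval0 : ∀ a b : C, a ≠ b → alf γ u a b * xval γ u a b + bef γ u a b = 0 := by
    intro a b hab
    have hα := hgen a b hab
    rw [xval]
    field_simp
    ring
  have hchar : ∀ x : ℝ, xval γ u e₁.1 e₁.2 < x → x < xval γ u e₂.1 e₂.2 →
      ∀ a b : C, σ a < σ b → ⟪v, nvec γ a b⟫ = cst γ a b →
        alf γ u a b * x + bef γ u a b < 0 := by
    intro x hlox hxhi a b hab hS
    rcases (hgen a b (hσne hab)).lt_or_gt with hα | hα
    · have hxle : xval γ u a b ≤ xval γ u e₁.1 e₁.2 := he₁max (a, b) ⟨⟨hab, hS⟩, hα⟩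
      have hxlt : xval γ u a b < x := lt_of_le_of_lt hxle hlox
      have h1 : alf γ u a b * x < alf γ u a b * xval γ u a b :=
        mul_lt_mul_of_neg_left hxlt hα
      have h2 := hxval0 a b (hσne hab)
      linarith
    · have hxge : xval γ u e₂.1 e₂.2 ≤ xval γ u a b := he₂min (a, b) ⟨⟨hab, hS⟩, hα⟩
      have hxgt : x < xval γ u a b := lt_of_lt_of_le hxhi hxge
      have h1 : alf γ u a b * x < alf γ u a b * xval γ u a b :=
        (mul_lt_mul_iff_right₀ hα).mpr hxgt
      have h2 := hxval0 a b (hσne hab)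
      linarith
  have hlox₀ : xval γ u e₁.1 e₁.2 < x₀ := by
    have h1 := hx₀ e₁.1 e₁.2 he₁.1.1 he₁.1.2
    rw [xval, div_lt_iff_of_neg he₁.2]
    linarith
  have hx₀hi : x₀ < xval γ u e₂.1 e₂.2 := by
    have h1 := hx₀ e₂.1 e₂.2 he₂.1.1 he₂.1.2
    rw [xval, lt_div_iff₀ he₂.2]
    linarith
  exact ⟨v, e₁.1, e₁.2, e₂.1, e₂.2, hstrict, hle, he₁.1.1, he₁.1.2,
    he₂.1.1, he₂.1.2, lt_trans hlox₀ hx₀hi, hchar⟩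

end WithC

lemma pair_eq_cases {C : Type*} [DecidableEq C] {a b c d : C} (hab : a ≠ b)
    (h : ({a, b} : Finset C) = {c, d}) : (a = c ∧ b = d) ∨ (a = d ∧ b = c) := by
  have ha : a ∈ ({c, d} : Finset C) := h ▸ Finset.mem_insert_self a {b}
  have hb : b ∈ ({c, d} : Finset C) := h ▸ Finset.mem_insert_of_mem (Finset.mem_singleton_self b)
  have hc : c ∈ ({a, b} : Finset C) := h ▸ Finset.mem_insert_self c {d}
  have hd : d ∈ ({a, b} : Finset C) := h ▸ Finset.mem_insert_of_mem (Finset.mem_singleton_self d)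
  simp only [Finset.mem_insert, Finset.mem_singleton] at ha hb hc hd
  rcases ha with h1 | h1 <;> rcases hb with h2 | h2 <;> tauto

lemma four_in_three {y a b c x1 x2 x3 : ℝ} (h1 : y < a) (h2 : a < b) (h3 : b < c)
    (hy : y = x1 ∨ y = x2 ∨ y = x3) (ha : a = x1 ∨ a = x2 ∨ a = x3)
    (hb : b = x1 ∨ b = x2 ∨ b = x3) (hc : c = x1 ∨ c = x2 ∨ c = x3) : False := by
  rcases hy with rfl | rfl | rfl <;> rcases ha with h | h | h <;>
    rcases hb with h' | h' | h' <;> rcases hc with h'' | h'' | h'' <;> linarith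

/-- separation lemma: if any two elements of S are separated by an element of T and
    S avoids T, then |S| ≤ |T| + 1 -/
lemma sep_finset (S T : Finset ℝ) (h1 : ∀ s ∈ S, s ∉ T)
    (h2 : ∀ s ∈ S, ∀ s' ∈ S, s < s' → ∃ t ∈ T, s < t ∧ t < s') : S.card ≤ T.card + 1 := by
  classical
  rcases S.eq_empty_or_nonempty with hS | hS
  · simp [hS]
  set sm := S.max' hS with hsm
  set f : ℝ → ℝ := fun s =>
    if h : (T.filter (fun t => s < t)).Nonempty then (T.filter (fun t => s < t)).min' h else 0
    with hf
  have hfprop : ∀ s ∈ S.erase sm, f s ∈ T ∧ s < f s ∧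
      ∀ t ∈ T, s < t → f s ≤ t := by
    intro s hs
    have hsS := Finset.mem_of_mem_erase hs
    have hslt : s < sm := lt_of_le_of_ne (S.le_max' s hsS) (Finset.ne_of_mem_erase hs)
    obtain ⟨t, htT, hst, hts⟩ := h2 s hsS sm (S.max'_mem hS) hslt
    have hne : (T.filter (fun t => s < t)).Nonempty :=
      ⟨t, Finset.mem_filter.mpr ⟨htT, hst⟩⟩
    rw [hf]
    simp only [dif_pos hne]
    refine ⟨?_, ?_, ?_⟩
    · exact (Finset.mem_filter.mp ((T.filter (fun t => s < t)).min'_mem hne)).1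
    · exact (Finset.mem_filter.mp ((T.filter (fun t => s < t)).min'_mem hne)).2
    · intro t' ht' hst'
      exact Finset.min'_le _ _ (Finset.mem_filter.mpr ⟨ht', hst'⟩)
  have hinj : Set.InjOn f (S.erase sm) := by
    intro s1 hs1 s2 hs2 heq
    by_contra hne
    rcases lt_or_gt_of_ne hne with hlt | hlt
    · obtain ⟨t, htT, h1t, h2t⟩ := h2 s1 (Finset.mem_of_mem_erase hs1) s2
        (Finset.mem_of_mem_erase hs2) hlt
      have ha := (hfprop s1 hs1).2.2 t htT h1t
      have hb := (hfprop s2 hs2).2.1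
      rw [heq] at ha
      linarith
    · obtain ⟨t, htT, h1t, h2t⟩ := h2 s2 (Finset.mem_of_mem_erase hs2) s1
        (Finset.mem_of_mem_erase hs1) hlt
      have ha := (hfprop s2 hs2).2.2 t htT h1t
      have hb := (hfprop s1 hs1).2.1
      rw [heq] at hb
      linarith
  have hcard : (S.erase sm).card ≤ T.card :=
    Finset.card_le_card_of_injOn f (fun s hs => (hfprop s hs).1) hinj
  have := Finset.card_erase_of_mem (S.max'_mem hS)
  have : S.card - 1 ≤ T.card := by rw [← this]; exact hcard
  have hpos : 1 ≤ S.card := Finset.card_pos.mpr hS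
  omega

section WithC
variable {C : Type*} [Fintype C] [Nonempty C] [LinearOrder C] (γ : C → Plane) {u : Plane}

def pick (s : Finset C) : C := if h : s.Nonempty then s.min' h else Classical.arbitrary C

lemma pick_mem {s : Finset C} (h : s.Nonempty) : pick s ∈ s := by
  rw [pick, dif_pos h]; exact s.min'_mem h

lemma pick_le {s : Finset C} (h : s.Nonempty) {x : C} (hx : x ∈ s) : pick s ≤ x := by
  rw [pick, dif_pos h]; exact s.min'_le x hx

/-- the B-side count: rankings whose region is nonempty but unbounded below -/
lemma countB {m : ℕ} (hγ : Function.Injective γ) (hu : ⟪u, u⟫ = 1)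
    (hgen : ∀ a b : C, a ≠ b → alf γ u a b ≠ 0) :
    ({σ : C ≃ Fin m | (region γ σ).Nonempty ∧
        ¬∃ y₀ : ℝ, ∀ p ∈ region γ σ, y₀ ≤ psi u p}).ncard
      ≤ (Fintype.card C).choose 2 + 1 := by
  classical
  set B := {σ : C ≃ Fin m | (region γ σ).Nonempty ∧
      ¬∃ y₀ : ℝ, ∀ p ∈ region γ σ, y₀ ≤ psi u p} with hB
  rcases isEmpty_or_nonempty (C ≃ Fin m) with hEmp | hNe
  · have : B = ∅ := Set.eq_empty_of_isEmpty B
    rw [this]; simp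
  -- choose a point in each nonempty region
  have hpt : ∀ σ : C ≃ Fin m, ∃ p : Plane, σ ∈ B → p ∈ region γ σ := by
    intro σ
    by_cases h : σ ∈ B
    · exact ⟨h.1.some, fun _ => h.1.some_mem⟩
    · exact ⟨0, fun hc => absurd hc h⟩
  choose pt hpt using hpt
  have hUne : (Finset.univ : Finset (C ≃ Fin m)).Nonempty := Finset.univ_nonempty
  set y₀ := ((Finset.univ : Finset (C ≃ Fin m)).image (fun σ => psi u (pt σ))).min'
    (hUne.image _) - 1 with hy₀
  have hy₀lt : ∀ σ : C ≃ Fin m, y₀ < psi u (pt σ) := by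
    intro σ
    have : ((Finset.univ : Finset (C ≃ Fin m)).image (fun σ => psi u (pt σ))).min'
        (hUne.image _) ≤ psi u (pt σ) :=
      Finset.min'_le _ _ (Finset.mem_image_of_mem _ (Finset.mem_univ σ))
    rw [hy₀]; linarith
  -- a point of each B-region exactly at height y₀
  have hq : ∀ σ : C ≃ Fin m, ∃ q : Plane, σ ∈ B → q ∈ region γ σ ∧ psi u q = y₀ := by
    intro σ
    by_cases hσ : σ ∈ B
    · have hnb := hσ.2
      push_neg at hnb
      obtain ⟨p₂, hp₂, hp₂lt⟩ := hnb y₀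
      set p₁ := pt σ with hp₁def
      have hp₁ : p₁ ∈ region γ σ := hpt σ hσ
      have h1 : y₀ < psi u p₁ := hy₀lt σ
      set t := (y₀ - psi u p₂) / (psi u p₁ - psi u p₂) with ht
      have hden : 0 < psi u p₁ - psi u p₂ := by linarith
      have ht0 : 0 < t := div_pos (by linarith) hden
      have ht1 : t < 1 := by
        rw [ht, div_lt_one hden]; linarith
      refine ⟨p₂ + t • (p₁ - p₂), fun _ => ⟨?_, ?_⟩⟩
      · rw [mem_region_iff]
        intro a b hab
        have hin : ⟪p₂ + t • (p₁ - p₂), nvec γ a b⟫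
            = (1 - t) * ⟪p₂, nvec γ a b⟫ + t * ⟪p₁, nvec γ a b⟫ := by
          rw [inner_add_left, real_inner_smul_left, inner_sub_left]; ring
        have hc1 := (mem_region_iff γ σ p₁).mp hp₁ a b hab
        have hc2 := (mem_region_iff γ σ p₂).mp hp₂ a b hab
        rw [hin]
        nlinarith
      · have hcalc : psi u (p₂ + t • (p₁ - p₂)) = psi u p₂ + t * (psi u p₁ - psi u p₂) := by
          rw [psi_eq, inner_add_left, real_inner_smul_left, inner_sub_left]
          rfl
        rw [hcalc, ht]
        field_simp
        ring
    · exact ⟨0, fun hc => absurd hc hσ⟩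
  choose q hq using hq
  set xm : (C ≃ Fin m) → ℝ := fun σ => phi u (q σ) with hxm
  -- crossing values
  set tv : C → C → ℝ := fun a b => (cst γ a b - y₀ * bef γ u a b) / alf γ u a b with htv
  have htvswap : ∀ a b : C, tv b a = tv a b := by
    intro a b
    rw [htv]
    simp only
    rw [alf_swap, bef_swap, cswap]
    rw [div_neg, ← neg_div]
    ring_nf
  set T : Finset ℝ := (Finset.univ.powersetCard 2).image
    (fun s : Finset C => tv (pick s) (pick (s.erase (pick s)))) with hT
  have hTval : ∀ a b : C, a ≠ b → tv a b ∈ T := by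
    intro a b hab
    have hcard : ({a, b} : Finset C).card = 2 := Finset.card_pair hab
    have hmem : ({a, b} : Finset C) ∈ Finset.univ.powersetCard 2 :=
      Finset.mem_powersetCard_univ.mpr hcard
    have hne : ({a, b} : Finset C).Nonempty := ⟨a, Finset.mem_insert_self a {b}⟩
    set p := pick ({a, b} : Finset C) with hp
    have hpmem := pick_mem hne
    have herasene : (({a, b} : Finset C).erase p).Nonempty := by
      rw [← Finset.card_pos, Finset.card_erase_of_mem (hp ▸ hpmem), hcard]
      norm_num
    set z := pick (({a, b} : Finset C).erase p) with hz
    have hzmem := pick_mem herasene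
    have hzin : z ∈ ({a, b} : Finset C) := Finset.mem_of_mem_erase (hz ▸ hzmem)
    have hzp : z ≠ p := Finset.ne_of_mem_erase (hz ▸ hzmem)
    have hsub : ({p, z} : Finset C) ⊆ {a, b} := by
      intro x hx
      rcases Finset.mem_insert.mp hx with h | h
      · rw [h]; exact hp ▸ hpmem
      · rw [Finset.mem_singleton.mp h]; exact hzin
    have hpz : ({p, z} : Finset C) = {a, b} := by
      apply Finset.eq_of_subset_of_card_le hsub
      rw [Finset.card_pair (Ne.symm hzp), hcard]
    have : tv p z = tv a b := by
      rcases pair_eq_cases (Ne.symm hzp) hpz with ⟨h1, h2⟩ | ⟨h1, h2⟩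
      · rw [h1, h2]
      · rw [h1, h2, htvswap]
    rw [hT]
    apply Finset.mem_image.mpr
    exact ⟨{a, b}, hmem, by rw [← hp, ← hz, this]⟩
  have hTcard : T.card ≤ (Fintype.card C).choose 2 := by
    rw [hT]
    refine le_trans (Finset.card_image_le) ?_
    rw [Finset.card_powersetCard, Finset.card_univ]
  -- key separation property
  have hexpand : ∀ σ : C ≃ Fin m, σ ∈ B → ∀ a b : C,
      ⟪q σ, nvec γ a b⟫ = alf γ u a b * xm σ + bef γ u a b * y₀ := by
    intro σ hσ a b
    have h1 := expand hu (q σ) (nvec γ a b)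
    have h2 := (hq σ hσ).2
    rw [h2] at h1
    rw [h1, alf_eq, bef_eq, hxm]
    ring
  have hsep : ∀ σ ∈ B, ∀ σ' ∈ B, σ ≠ σ' →
      ∃ t ∈ T, (xm σ < t ∧ t < xm σ') ∨ (xm σ' < t ∧ t < xm σ) := by
    intro σ hσ σ' hσ' hne
    obtain ⟨a, b, hab, hba⟩ := diffpair hne
    have habne : a ≠ b := fun he => lt_irrefl _ (he ▸ hab)
    have hα := hgen a b habne
    have h1 : ⟪q σ, nvec γ a b⟫ < cst γ a b :=
      (mem_region_iff γ σ (q σ)).mp (hq σ hσ).1 a b hab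
    have h2' : ⟪q σ', nvec γ b a⟫ < cst γ b a :=
      (mem_region_iff γ σ' (q σ')).mp (hq σ' hσ').1 b a hba
    have h2 : cst γ a b < ⟪q σ', nvec γ a b⟫ := by
      rw [nswap, cswap, inner_neg_right] at h2'
      linarith
    rw [hexpand σ hσ a b] at h1
    rw [hexpand σ' hσ' a b] at h2
    refine ⟨tv a b, hTval a b habne, ?_⟩
    rcases hα.lt_or_gt with hαneg | hαpos
    · right
      constructor
      · rw [htv]
        simp only
        rw [lt_div_iff_of_neg hαneg]
        nlinarith
      · rw [htv]
        simp only
        rw [div_lt_iff_of_neg hαneg]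
        nlinarith
    · left
      constructor
      · rw [htv]
        simp only
        rw [lt_div_iff₀ hαpos]
        nlinarith
      · rw [htv]
        simp only
        rw [div_lt_iff₀ hαpos]
        nlinarith
  have hnotT : ∀ σ ∈ B, xm σ ∉ T := by
    intro σ hσ hmemT
    rw [hT] at hmemT
    obtain ⟨s, hs, hval⟩ := Finset.mem_image.mp hmemT
    have hscard := Finset.mem_powersetCard_univ.mp hs
    have hsne : s.Nonempty := by
      rw [← Finset.card_pos, hscard]; norm_num
    set p := pick s with hp
    have hpmem := pick_mem hsne
    have herasene : (s.erase p).Nonempty := by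
      rw [← Finset.card_pos, Finset.card_erase_of_mem (hp ▸ hpmem), hscard]
      norm_num
    set z := pick (s.erase p) with hz
    have hzmem := pick_mem herasene
    have hzp : z ≠ p := Finset.ne_of_mem_erase (hz ▸ hzmem)
    have hpz : p ≠ z := Ne.symm hzp
    have hα := hgen p z hpz
    -- xm σ = tv p z means the point q σ is on the line of the pair (p, z)
    have honline : ⟪q σ, nvec γ p z⟫ = cst γ p z := by
      rw [hexpand σ hσ p z]
      have : alf γ u p z * xm σ = cst γ p z - y₀ * bef γ u p z := by
        rw [← hval, htv]
        simp only
        field_simp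
      rw [this]; ring
    have hqreg := (hq σ hσ).1
    rcases lt_trichotomy (σ p) (σ z) with h | h | h
    · have := (mem_region_iff γ σ (q σ)).mp hqreg p z h
      linarith
    · exact hpz (σ.injective h)
    · have h' := (mem_region_iff γ σ (q σ)).mp hqreg z p h
      rw [nswap, cswap, inner_neg_right] at h'
      linarith
  -- now count
  have hBfin : B.Finite := B.toFinite
  set S : Finset ℝ := hBfin.toFinset.image xm with hS
  have hinj : Set.InjOn xm hBfin.toFinset := by
    intro σ hσ σ' hσ' heq
    by_contra hne
    obtain ⟨t, _, hcase⟩ := hsep σ (hBfin.mem_toFinset.mp (Finset.mem_coe.mp hσ))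
      σ' (hBfin.mem_toFinset.mp (Finset.mem_coe.mp hσ')) hne
    rcases hcase with ⟨h1, h2⟩ | ⟨h1, h2⟩
    · rw [heq] at h1; linarith
    · rw [heq] at h2; linarith
  have hScard : S.card = B.ncard := by
    rw [hS, Finset.card_image_of_injOn hinj, Set.ncard_eq_toFinset_card B hBfin]
  have hfinal : S.card ≤ T.card + 1 := by
    apply sep_finset
    · intro s hs
      obtain ⟨σ, hσ, hval⟩ := Finset.mem_image.mp hs
      rw [← hval]
      exact hnotT σ (hBfin.mem_toFinset.mp hσ)
    · intro s hs s' hs' hlt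
      obtain ⟨σ, hσ, hval⟩ := Finset.mem_image.mp hs
      obtain ⟨σ', hσ', hval'⟩ := Finset.mem_image.mp hs'
      have hne : σ ≠ σ' := by
        intro he
        rw [he, hval'] at hval
        exact absurd hval (ne_of_gt hlt)
      obtain ⟨t, htT, hcase⟩ := hsep σ (hBfin.mem_toFinset.mp hσ)
        σ' (hBfin.mem_toFinset.mp hσ') hne
      rcases hcase with ⟨h1, h2⟩ | ⟨h1, h2⟩
      · exact ⟨t, htT, by rw [← hval]; exact h1, by rw [← hval']; exact h2⟩
      · rw [hval'] at h1; rw [hval] at h2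
        linarith
  rw [← hScard]
  calc S.card ≤ T.card + 1 := hfinal
    _ ≤ (Fintype.card C).choose 2 + 1 := by omega

end WithC

section WithC
variable {C : Type*} [Fintype C] [Nonempty C] [LinearOrder C] (γ : C → Plane) {u : Plane}

lemma act_transfer {v : Plane} {a b c d : C} (hab : a ≠ b)
    (h : ({a, b} : Finset C) = {c, d}) (hv : ⟪v, nvec γ c d⟫ = cst γ c d) :
    ⟪v, nvec γ a b⟫ = cst γ a b := by
  rcases pair_eq_cases hab h with ⟨h1, h2⟩ | ⟨h1, h2⟩
  · rw [h1, h2]; exact hv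
  · rw [h1, h2, nswap, cswap, inner_neg_right]
    rw [hv]

lemma xval_transfer (u : Plane) {a b c d : C} (hab : a ≠ b)
    (h : ({a, b} : Finset C) = {c, d}) : xval γ u a b = xval γ u c d := by
  rcases pair_eq_cases hab h with ⟨h1, h2⟩ | ⟨h1, h2⟩
  · rw [h1, h2]
  · rw [h1, h2, xval_swap]

lemma countA {m : ℕ} (hγ : Function.Injective γ) (hu : ⟪u, u⟫ = 1)
    (hgen : ∀ a b : C, a ≠ b → alf γ u a b ≠ 0) :
    ({σ : C ≃ Fin m | (region γ σ).Nonempty ∧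
        ∃ y₀ : ℝ, ∀ p ∈ region γ σ, y₀ ≤ psi u p}).ncard
      ≤ 2 * (Fintype.card C).choose 3 + 3 * (Fintype.card C).choose 4 := by
  classical
  set A := {σ : C ≃ Fin m | (region γ σ).Nonempty ∧
      ∃ y₀ : ℝ, ∀ p ∈ region γ σ, y₀ ≤ psi u p} with hA
  have hkey : ∀ σ : C ≃ Fin m, ∃ (v : Plane) (a₁ b₁ a₂ b₂ : C), σ ∈ A →
      (σ a₁ < σ b₁ ∧ σ a₂ < σ b₂ ∧
       ⟪v, nvec γ a₁ b₁⟫ = cst γ a₁ b₁ ∧ ⟪v, nvec γ a₂ b₂⟫ = cst γ a₂ b₂ ∧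
       xval γ u a₁ b₁ < xval γ u a₂ b₂ ∧
       (∀ a b : C, σ a < σ b → ⟪v, nvec γ a b⟫ ≤ cst γ a b) ∧
       (∀ x : ℝ, xval γ u a₁ b₁ < x → x < xval γ u a₂ b₂ →
         ∀ a b : C, σ a < σ b → ⟪v, nvec γ a b⟫ = cst γ a b →
           alf γ u a b * x + bef γ u a b < 0)) := by
    intro σ
    by_cases h : σ ∈ A
    · obtain ⟨v, a₁, b₁, a₂, b₂, _, h2, h3, h4, h5, h6, h7, h8⟩ :=
        keydata γ σ hγ hu hgen h.1 h.2
      exact ⟨v, a₁, b₁, a₂, b₂, fun _ => ⟨h3, h5, h4, h6, h7, h2, h8⟩⟩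
    · exact ⟨0, Classical.arbitrary C, Classical.arbitrary C, Classical.arbitrary C,
        Classical.arbitrary C, fun hc => absurd hc h⟩
  choose v a₁ b₁ a₂ b₂ H using hkey
  set lo : (C ≃ Fin m) → ℝ := fun σ => xval γ u (a₁ σ) (b₁ σ) with hlo
  set hi : (C ≃ Fin m) → ℝ := fun σ => xval γ u (a₂ σ) (b₂ σ) with hhi
  set slo : (C ≃ Fin m) → Finset C := fun σ => {a₁ σ, b₁ σ} with hslo
  set shi : (C ≃ Fin m) → Finset C := fun σ => {a₂ σ, b₂ σ} with hshi
  set Tk : (C ≃ Fin m) → Finset C := fun σ => slo σ ∪ shi σ with hTk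
  have hne1 : ∀ σ, σ ∈ A → a₁ σ ≠ b₁ σ := by
    intro σ hσ he
    exact lt_irrefl _ (he ▸ (H σ hσ).1)
  have hne2 : ∀ σ, σ ∈ A → a₂ σ ≠ b₂ σ := by
    intro σ hσ he
    exact lt_irrefl _ (he ▸ (H σ hσ).2.1)
  have hlohi : ∀ σ, σ ∈ A → lo σ < hi σ := fun σ hσ => (H σ hσ).2.2.2.2.1
  have hact1 : ∀ σ, σ ∈ A → ⟪v σ, nvec γ (a₁ σ) (b₁ σ)⟫ = cst γ (a₁ σ) (b₁ σ) :=
    fun σ hσ => (H σ hσ).2.2.1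
  have hact2 : ∀ σ, σ ∈ A → ⟪v σ, nvec γ (a₂ σ) (b₂ σ)⟫ = cst γ (a₂ σ) (b₂ σ) :=
    fun σ hσ => (H σ hσ).2.2.2.1
  have hle : ∀ σ, σ ∈ A → ∀ a b : C, σ a < σ b → ⟪v σ, nvec γ a b⟫ ≤ cst γ a b :=
    fun σ hσ => (H σ hσ).2.2.2.2.2.1
  have hchar : ∀ σ, σ ∈ A → ∀ x : ℝ, lo σ < x → x < hi σ →
      ∀ a b : C, σ a < σ b → ⟪v σ, nvec γ a b⟫ = cst γ a b →
        alf γ u a b * x + bef γ u a b < 0 :=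
    fun σ hσ => (H σ hσ).2.2.2.2.2.2
  -- master disjointness lemma
  have hM : ∀ σ, σ ∈ A → ∀ σ', σ' ∈ A → v σ = v σ' → ∀ x : ℝ,
      lo σ < x → x < hi σ → lo σ' < x → x < hi σ' → σ = σ' := by
    intro σ hσ σ' hσ' hv x l1 l2 l3 l4
    by_contra hnee
    obtain ⟨a, b, hab, hba⟩ := diffpair hnee
    have e1 : ⟪v σ, nvec γ a b⟫ ≤ cst γ a b := hle σ hσ a b hab
    have e2' : ⟪v σ', nvec γ b a⟫ ≤ cst γ b a := hle σ' hσ' b a hba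
    rw [← hv, nswap, cswap, inner_neg_right] at e2'
    have heq1 : ⟪v σ, nvec γ a b⟫ = cst γ a b := le_antisymm e1 (by linarith)
    have heq2 : ⟪v σ', nvec γ b a⟫ = cst γ b a := by
      rw [nswap, cswap, inner_neg_right, ← hv, heq1]
    have c1 := hchar σ hσ x l1 l2 a b hab heq1
    have c2 := hchar σ' hσ' x l3 l4 b a hba heq2
    rw [alf_swap, bef_swap] at c2
    linarith
  -- basic cardinalities
  have hslocard : ∀ σ, σ ∈ A → (slo σ).card = 2 :=
    fun σ hσ => Finset.card_pair (hne1 σ hσ)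
  have hshicard : ∀ σ, σ ∈ A → (shi σ).card = 2 :=
    fun σ hσ => Finset.card_pair (hne2 σ hσ)
  have hsloshine : ∀ σ, σ ∈ A → slo σ ≠ shi σ := by
    intro σ hσ he
    have := xval_transfer γ u (hne1 σ hσ) (he : ({a₁ σ, b₁ σ} : Finset C) = {a₂ σ, b₂ σ})
    exact absurd this (ne_of_lt (hlohi σ hσ))
  have hsloT : ∀ σ, slo σ ⊆ Tk σ := fun σ => Finset.subset_union_left
  have hshiT : ∀ σ, shi σ ⊆ Tk σ := fun σ => Finset.subset_union_right
  have ha₁T : ∀ σ, a₁ σ ∈ Tk σ := fun σ => hsloT σ (Finset.mem_insert_self _ _)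
  have hb₁T : ∀ σ, b₁ σ ∈ Tk σ :=
    fun σ => hsloT σ (Finset.mem_insert_of_mem (Finset.mem_singleton_self _))
  have ha₂T : ∀ σ, a₂ σ ∈ Tk σ := fun σ => hshiT σ (Finset.mem_insert_self _ _)
  have hb₂T : ∀ σ, b₂ σ ∈ Tk σ :=
    fun σ => hshiT σ (Finset.mem_insert_of_mem (Finset.mem_singleton_self _))
  -- in the intersecting case, all pairs of Tk are active
  have hTact : ∀ σ, σ ∈ A → (slo σ ∩ shi σ).Nonempty →
      ∀ p ∈ Tk σ, ∀ q ∈ Tk σ, p ≠ q → ⟪v σ, nvec γ p q⟫ = cst γ p q := by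
    intro σ hσ hint p hp q hq hpq
    obtain ⟨w, hw⟩ := hint
    have hwlo := Finset.mem_inter.mp hw |>.1
    have hwhi := Finset.mem_inter.mp hw |>.2
    have hd1 : dist (v σ) (γ (a₁ σ)) = dist (v σ) (γ (b₁ σ)) :=
      (dist_eq_iff γ _ _ _).mpr (hact1 σ hσ)
    have hd2 : dist (v σ) (γ (a₂ σ)) = dist (v σ) (γ (b₂ σ)) :=
      (dist_eq_iff γ _ _ _).mpr (hact2 σ hσ)
    have hmemlo : ∀ x ∈ slo σ, dist (v σ) (γ x) = dist (v σ) (γ (a₁ σ)) := by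
      intro x hx
      rcases Finset.mem_insert.mp hx with h | h
      · rw [h]
      · rw [Finset.mem_singleton.mp h, hd1]
    have hmemhi : ∀ x ∈ shi σ, dist (v σ) (γ x) = dist (v σ) (γ (a₂ σ)) := by
      intro x hx
      rcases Finset.mem_insert.mp hx with h | h
      · rw [h]
      · rw [Finset.mem_singleton.mp h, hd2]
    have hdall : ∀ x ∈ Tk σ, dist (v σ) (γ x) = dist (v σ) (γ w) := by
      intro x hx
      rcases Finset.mem_union.mp hx with h | h
      · rw [hmemlo x h, ← hmemlo w hwlo]
      · rw [hmemhi x h, ← hmemhi w hwhi]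
    apply (dist_eq_iff γ _ _ _).mp
    rw [hdall p hp, hdall q hq]
  -- define the token map
  set tok : (C ≃ Fin m) → (Finset C × Bool) ⊕ (Finset C × C) := fun σ =>
    if (slo σ ∩ shi σ).Nonempty then
      Sum.inl (Tk σ,
        if (∀ p ∈ Tk σ, ∀ q ∈ Tk σ, p ≠ q → lo σ ≤ xval γ u p q) then true else false)
    else
      Sum.inr (Tk σ, pick ((if pick (Tk σ) ∈ slo σ then slo σ else shi σ).erase (pick (Tk σ))))
    with htokdef
  -- cardinality of the union in each case
  have hT3card : ∀ σ, σ ∈ A → (slo σ ∩ shi σ).Nonempty → (Tk σ).card = 3 := by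
    intro σ hσ hint
    rw [hTk]
    show (slo σ ∪ shi σ).card = 3
    have h1 := Finset.card_union_add_card_inter (slo σ) (shi σ)
    have h2 : (slo σ ∩ shi σ).card ≤ 2 := by
      rw [← hslocard σ hσ]
      exact Finset.card_le_card Finset.inter_subset_left
    have h3 : 1 ≤ (slo σ ∩ shi σ).card := Finset.card_pos.mpr hint
    have h4 : (slo σ ∩ shi σ).card ≠ 2 := by
      intro he
      have hsl : slo σ ∩ shi σ = slo σ := by
        apply Finset.eq_of_subset_of_card_le Finset.inter_subset_left
        rw [he, hslocard σ hσ]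
      have hsh : slo σ ∩ shi σ = shi σ := by
        apply Finset.eq_of_subset_of_card_le Finset.inter_subset_right
        rw [he, hshicard σ hσ]
      exact hsloshine σ hσ (hsl ▸ hsh)
    rw [hslocard σ hσ, hshicard σ hσ] at h1
    have : (slo σ ∩ shi σ).card = 1 := by omega
    rw [this] at h1
    omega
  have hT4card : ∀ σ, σ ∈ A → ¬(slo σ ∩ shi σ).Nonempty → (Tk σ).card = 4 := by
    intro σ hσ hint
    have hdisj : Disjoint (slo σ) (shi σ) := by
      rw [Finset.disjoint_iff_inter_eq_empty, ← Finset.not_nonempty_iff_eq_empty]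
      exact hint
    rw [hTk]
    show (slo σ ∪ shi σ).card = 4
    rw [Finset.card_union_of_disjoint hdisj, hslocard σ hσ, hshicard σ hσ]
  -- injectivity
  have hinj : Set.InjOn tok A := by
    intro σ hσ σ' hσ' htok
    by_cases h3 : (slo σ ∩ shi σ).Nonempty <;> by_cases h3' : (slo σ' ∩ shi σ').Nonempty
    · -- both tok3
      rw [htokdef] at htok
      simp only [if_pos h3, if_pos h3', Sum.inl.injEq, Prod.mk.injEq] at htok
      obtain ⟨hTT, hBB⟩ := htok
      -- v σ = v σ'
      obtain ⟨t1, t2, t3, h12, h13, h23, hTeq⟩ := Finset.card_eq_three.mp (hT3card σ hσ h3)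
      have ht1 : t1 ∈ Tk σ := by rw [hTeq]; simp
      have ht2 : t2 ∈ Tk σ := by rw [hTeq]; simp
      have ht3 : t3 ∈ Tk σ := by rw [hTeq]; simp
      have hveq : v σ = v σ' := by
        refine triple_unique γ hγ h12 h13 h23
          (hTact σ hσ h3 t1 ht1 t2 ht2 h12) (hTact σ hσ h3 t1 ht1 t3 ht3 h13) ?_ ?_
        · exact hTact σ' hσ' h3' t1 (hTT ▸ ht1) t2 (hTT ▸ ht2) h12
        · exact hTact σ' hσ' h3' t1 (hTT ▸ ht1) t3 (hTT ▸ ht3) h13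
      -- booleans
      by_cases hP : (∀ p ∈ Tk σ, ∀ q ∈ Tk σ, p ≠ q → lo σ ≤ xval γ u p q) <;>
        by_cases hP' : (∀ p ∈ Tk σ', ∀ q ∈ Tk σ', p ≠ q → lo σ' ≤ xval γ u p q)
      · -- both true: lo σ = lo σ'
        have hll' : lo σ ≤ lo σ' := hP (a₁ σ') (hTT ▸ ha₁T σ') (b₁ σ') (hTT ▸ hb₁T σ')
          (hne1 σ' hσ')
        have hl'l : lo σ' ≤ lo σ := hP' (a₁ σ) (hTT ▸ ha₁T σ) (b₁ σ) (hTT ▸ hb₁T σ)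
          (hne1 σ hσ)
        have hloeq : lo σ = lo σ' := le_antisymm hll' hl'l
        set x := (lo σ + min (hi σ) (hi σ')) / 2 with hx
        have hm1 : lo σ < min (hi σ) (hi σ') := by
          rcases min_cases (hi σ) (hi σ') with ⟨hmm, _⟩ | ⟨hmm, _⟩
          · rw [hmm]; exact hlohi σ hσ
          · rw [hmm, hloeq]; exact hlohi σ' hσ'
        refine hM σ hσ σ' hσ' hveq x ?_ ?_ ?_ ?_
        · rw [hx]; linarith
        · have := min_le_left (hi σ) (hi σ'); rw [hx]; linarith
        · rw [← hloeq, hx]; linarith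
        · have := min_le_right (hi σ) (hi σ'); rw [hx]; linarith
      · exfalso; rw [if_pos hP, if_neg hP'] at hBB; exact Bool.noConfusion hBB
      · exfalso; rw [if_neg hP, if_pos hP'] at hBB; exact Bool.noConfusion hBB
      · -- both false
        push_neg at hP hP'
        obtain ⟨p, hp, q, hq, hpq, hylt⟩ := hP
        obtain ⟨p', hp', q', hq', hpq', hylt'⟩ := hP'
        have hval3 : ∀ r ∈ Tk σ, ∀ s ∈ Tk σ, r ≠ s →
            xval γ u r s = xval γ u t1 t2 ∨ xval γ u r s = xval γ u t1 t3 ∨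
            xval γ u r s = xval γ u t2 t3 := by
          intro r hr s hs hrs
          rw [hTeq] at hr hs
          simp only [Finset.mem_insert, Finset.mem_singleton] at hr hs
          rcases hr with rfl | rfl | rfl <;> rcases hs with rfl | rfl | rfl
          · exact absurd rfl hrs
          · left; rfl
          · right; left; rfl
          · left; exact xval_swap γ u _ _
          · exact absurd rfl hrs
          · right; right; rfl
          · right; left; exact xval_swap γ u _ _
          · right; right; exact xval_swap γ u _ _
          · exact absurd rfl hrs
        have hmemlo : ∀ τ (hτ : τ ∈ A), Tk τ = Tk σ →
            xval γ u (a₁ τ) (b₁ τ) = xval γ u t1 t2 ∨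
            xval γ u (a₁ τ) (b₁ τ) = xval γ u t1 t3 ∨
            xval γ u (a₁ τ) (b₁ τ) = xval γ u t2 t3 := by
          intro τ hτ hT
          exact hval3 _ (hT ▸ ha₁T τ) _ (hT ▸ hb₁T τ) (hne1 τ hτ)
        have hmemhi : ∀ τ (hτ : τ ∈ A), Tk τ = Tk σ →
            xval γ u (a₂ τ) (b₂ τ) = xval γ u t1 t2 ∨
            xval γ u (a₂ τ) (b₂ τ) = xval γ u t1 t3 ∨
            xval γ u (a₂ τ) (b₂ τ) = xval γ u t2 t3 := by
          intro τ hτ hT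
          exact hval3 _ (hT ▸ ha₂T τ) _ (hT ▸ hb₂T τ) (hne2 τ hτ)
        rcases lt_trichotomy (lo σ) (lo σ') with hlt | heq | hlt
        · exfalso
          exact four_in_three hylt hlt (hlohi σ' hσ')
            (hval3 p hp q hq hpq)
            (hmemlo σ hσ rfl) (hmemlo σ' hσ' hTT.symm) (hmemhi σ' hσ' hTT.symm)
        · -- lo σ = lo σ' : common point
          set x := (lo σ + min (hi σ) (hi σ')) / 2 with hx
          have hm1 : lo σ < min (hi σ) (hi σ') := by
            rcases min_cases (hi σ) (hi σ') with ⟨hmm, _⟩ | ⟨hmm, _⟩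
            · rw [hmm]; exact hlohi σ hσ
            · rw [hmm, heq]; exact hlohi σ' hσ'
          refine hM σ hσ σ' hσ' hveq x ?_ ?_ ?_ ?_
          · rw [hx]; linarith
          · have := min_le_left (hi σ) (hi σ'); rw [hx]; linarith
          · rw [← heq, hx]; linarith
          · have := min_le_right (hi σ) (hi σ'); rw [hx]; linarith
        · exfalso
          exact four_in_three hylt' hlt (hlohi σ hσ)
            (hval3 p' (hTT ▸ hp') q' (hTT ▸ hq') hpq')
            (hmemlo σ' hσ' hTT.symm) (hmemlo σ hσ rfl) (hmemhi σ hσ rfl)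
    · exfalso; rw [htokdef] at htok
      simp only [if_pos h3, if_neg h3'] at htok
      cases htok
    · exfalso; rw [htokdef] at htok
      simp only [if_neg h3, if_pos h3'] at htok
      cases htok
    · -- both tok4
      rw [htokdef] at htok
      simp only [if_neg h3, if_neg h3', Sum.inr.injEq, Prod.mk.injEq] at htok
      obtain ⟨hTT, hzz⟩ := htok
      have hdisj : Disjoint (slo σ) (shi σ) := by
        rw [Finset.disjoint_iff_inter_eq_empty, ← Finset.not_nonempty_iff_eq_empty]
        exact h3
      have hdisj' : Disjoint (slo σ') (shi σ') := by
        rw [Finset.disjoint_iff_inter_eq_empty, ← Finset.not_nonempty_iff_eq_empty]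
        exact h3'
      have hTne : (Tk σ).Nonempty := by
        rw [← Finset.card_pos, hT4card σ hσ h3]; norm_num
      have hTne' : (Tk σ').Nonempty := by
        rw [← Finset.card_pos, hT4card σ' hσ' h3']; norm_num
      set mn := pick (Tk σ) with hmn
      have hmnT : mn ∈ Tk σ := pick_mem hTne
      set sσ := if pick (Tk σ) ∈ slo σ then slo σ else shi σ with hsσ
      set sσ' := if pick (Tk σ') ∈ slo σ' then slo σ' else shi σ' with hsσ'
      have hsel : (sσ = slo σ ∧ Tk σ \ sσ = shi σ) ∨ (sσ = shi σ ∧ Tk σ \ sσ = slo σ) := by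
        by_cases hc : pick (Tk σ) ∈ slo σ
        · left
          constructor
          · rw [hsσ, if_pos hc]
          · rw [hsσ, if_pos hc, hTk]
            exact Finset.union_sdiff_cancel_left hdisj
        · right
          constructor
          · rw [hsσ, if_neg hc]
          · rw [hsσ, if_neg hc, hTk]
            exact Finset.union_sdiff_cancel_right hdisj
      have hsel' : (sσ' = slo σ' ∧ Tk σ' \ sσ' = shi σ') ∨
          (sσ' = shi σ' ∧ Tk σ' \ sσ' = slo σ') := by
        by_cases hc : pick (Tk σ') ∈ slo σ'
        · left
          constructor
          · rw [hsσ', if_pos hc]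
          · rw [hsσ', if_pos hc, hTk]
            exact Finset.union_sdiff_cancel_left hdisj'
        · right
          constructor
          · rw [hsσ', if_neg hc]
          · rw [hsσ', if_neg hc, hTk]
            exact Finset.union_sdiff_cancel_right hdisj'
      -- sσ = sσ'
      have hscard : sσ.card = 2 := by
        rcases hsel with ⟨h, _⟩ | ⟨h, _⟩
        · rw [h]; exact hslocard σ hσ
        · rw [h]; exact hshicard σ hσ
      have hscard' : sσ'.card = 2 := by
        rcases hsel' with ⟨h, _⟩ | ⟨h, _⟩
        · rw [h]; exact hslocard σ' hσ'
        · rw [h]; exact hshicard σ' hσ'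
      have hmns : mn ∈ sσ := by
        by_cases hc : pick (Tk σ) ∈ slo σ
        · rw [hsσ, if_pos hc]; exact hc
        · rw [hsσ, if_neg hc]
          rcases Finset.mem_union.mp hmnT with h | h
          · exact absurd h hc
          · exact h
      have hmns' : pick (Tk σ') ∈ sσ' := by
        by_cases hc : pick (Tk σ') ∈ slo σ'
        · rw [hsσ', if_pos hc]; exact hc
        · rw [hsσ', if_neg hc]
          rcases Finset.mem_union.mp (pick_mem hTne') with h | h
          · exact absurd h hc
          · exact h
      have herasene : (sσ.erase mn).Nonempty := by
        rw [← Finset.card_pos, Finset.card_erase_of_mem hmns, hscard]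
        norm_num
      have herasene' : ((sσ'.erase (pick (Tk σ')))).Nonempty := by
        rw [← Finset.card_pos, Finset.card_erase_of_mem hmns', hscard']
        norm_num
      set z := pick (sσ.erase mn) with hz
      have hzmem : z ∈ sσ.erase mn := pick_mem herasene
      have hzs : z ∈ sσ := Finset.mem_of_mem_erase hzmem
      have hzmn : z ≠ mn := Finset.ne_of_mem_erase hzmem
      have hs_eq : sσ = {mn, z} := by
        symm
        apply Finset.eq_of_subset_of_card_le
        · intro x hx
          rcases Finset.mem_insert.mp hx with h | h
          · rw [h]; exact hmns
          · rw [Finset.mem_singleton.mp h]; exact hzs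
        · rw [Finset.card_pair (Ne.symm hzmn), hscard]
      set z' := pick (sσ'.erase (pick (Tk σ'))) with hz'
      have hzmem' : z' ∈ sσ'.erase (pick (Tk σ')) := pick_mem herasene'
      have hzs' : z' ∈ sσ' := Finset.mem_of_mem_erase hzmem'
      have hzmn' : z' ≠ pick (Tk σ') := Finset.ne_of_mem_erase hzmem'
      have hs_eq' : sσ' = {pick (Tk σ'), z'} := by
        symm
        apply Finset.eq_of_subset_of_card_le
        · intro x hx
          rcases Finset.mem_insert.mp hx with h | h
          · rw [h]; exact hmns'
          · rw [Finset.mem_singleton.mp h]; exact hzs'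
        · rw [Finset.card_pair (Ne.symm hzmn'), hscard']
      have hmneq : pick (Tk σ') = mn := by rw [hmn, hTT]
      have hzeq : z' = z := by rw [← hzz]
      have hss' : sσ = sσ' := by
        rw [hs_eq, hs_eq', hmneq, hzeq]
      -- match up the pairs
      have hpairs : (slo σ = slo σ' ∧ shi σ = shi σ') ∨
          (slo σ = shi σ' ∧ shi σ = slo σ') := by
        rcases hsel with ⟨h1, h2⟩ | ⟨h1, h2⟩ <;> rcases hsel' with ⟨h1', h2'⟩ | ⟨h1', h2'⟩
        · left
          constructor
          · rw [← h1, ← h1']; exact hss'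
          · rw [← h2, ← h2', hss', hTT]
        · right
          constructor
          · rw [← h1, ← h1']; exact hss'
          · rw [← h2, ← h2', hss', hTT]
        · right
          constructor
          · rw [← h2, ← h2', hss', hTT]
          · rw [← h1, ← h1']; exact hss'
        · left
          constructor
          · rw [← h2, ← h2', hss', hTT]
          · rw [← h1, ← h1']; exact hss'
      rcases hpairs with ⟨hpl, hph⟩ | ⟨hpl, hph⟩
      · -- aligned : conclude σ = σ'
        have hloeq : lo σ = lo σ' := by
          rw [hlo]
          exact xval_transfer γ u (hne1 σ hσ) (hpl : ({a₁ σ, b₁ σ} : Finset C) = _)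
        have hhieq : hi σ = hi σ' := by
          rw [hhi]
          exact xval_transfer γ u (hne2 σ hσ) (hph : ({a₂ σ, b₂ σ} : Finset C) = _)
        have hveq : v σ = v σ' := by
          refine sameline γ hu hγ hgen (hne1 σ hσ) (hne2 σ hσ)
            (hact1 σ hσ) ?_ (hact2 σ hσ) ?_ (ne_of_lt (hlohi σ hσ))
          · exact act_transfer γ (hne1 σ hσ) hpl (hact1 σ' hσ')
          · exact act_transfer γ (hne2 σ hσ) hph (hact2 σ' hσ')
        set x := (lo σ + hi σ) / 2 with hx
        have h1 := hlohi σ hσ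
        refine hM σ hσ σ' hσ' hveq x ?_ ?_ ?_ ?_
        · rw [hx]; linarith
        · rw [hx]; linarith
        · rw [← hloeq, hx]; linarith
        · rw [← hhieq, hx]; linarith
      · -- crossed : contradiction
        exfalso
        have h1 : lo σ = hi σ' := by
          rw [hlo, hhi]
          exact xval_transfer γ u (hne1 σ hσ) (hpl : ({a₁ σ, b₁ σ} : Finset C) = _)
        have h2 : hi σ = lo σ' := by
          rw [hlo, hhi]
          exact xval_transfer γ u (hne2 σ hσ) (hph : ({a₂ σ, b₂ σ} : Finset C) = _)
        have := hlohi σ hσ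
        have := hlohi σ' hσ'
        linarith
  -- counting the token targets
  set T3F : Finset (Finset C × Bool) :=
    (Finset.univ.powersetCard 3 ×ˢ (Finset.univ : Finset Bool)) with hT3F
  set T4F : Finset (Finset C × C) :=
    (Finset.univ.powersetCard 4).biUnion
      (fun U => (U.filter (fun z => ∃ y ∈ U, y < z)).image (fun z => (U, z))) with hT4F
  set TOKF : Finset ((Finset C × Bool) ⊕ (Finset C × C)) :=
    T3F.image Sum.inl ∪ T4F.image Sum.inr with hTOKF
  have himg : ∀ σ, σ ∈ A → tok σ ∈ TOKF := by
    intro σ hσ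
    rw [htokdef, hTOKF]
    by_cases h3 : (slo σ ∩ shi σ).Nonempty
    · simp only [if_pos h3]
      apply Finset.mem_union_left
      apply Finset.mem_image_of_mem
      rw [hT3F, Finset.mem_product]
      exact ⟨Finset.mem_powersetCard_univ.mpr (hT3card σ hσ h3), Finset.mem_univ _⟩
    · simp only [if_neg h3]
      apply Finset.mem_union_right
      apply Finset.mem_image_of_mem
      rw [hT4F, Finset.mem_biUnion]
      refine ⟨Tk σ, Finset.mem_powersetCard_univ.mpr (hT4card σ hσ h3), ?_⟩
      have hTne : (Tk σ).Nonempty := by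
        rw [← Finset.card_pos, hT4card σ hσ h3]; norm_num
      set mn := pick (Tk σ) with hmn
      set sσ := if pick (Tk σ) ∈ slo σ then slo σ else shi σ with hsσ
      have hmns : mn ∈ sσ := by
        by_cases hc : pick (Tk σ) ∈ slo σ
        · rw [hsσ, if_pos hc]; exact hc
        · rw [hsσ, if_neg hc]
          rcases Finset.mem_union.mp (pick_mem hTne) with h | h
          · exact absurd h hc
          · exact h
      have hscard : sσ.card = 2 := by
        by_cases hc : pick (Tk σ) ∈ slo σ
        · rw [hsσ, if_pos hc]; exact hslocard σ hσ
        · rw [hsσ, if_neg hc]; exact hshicard σ hσ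
      have hssub : sσ ⊆ Tk σ := by
        by_cases hc : pick (Tk σ) ∈ slo σ
        · rw [hsσ, if_pos hc]; exact hsloT σ
        · rw [hsσ, if_neg hc]; exact hshiT σ
      have herasene : (sσ.erase mn).Nonempty := by
        rw [← Finset.card_pos, Finset.card_erase_of_mem hmns, hscard]
        norm_num
      set z := pick (sσ.erase mn) with hz
      have hzmem : z ∈ sσ.erase mn := pick_mem herasene
      have hzT : z ∈ Tk σ := hssub (Finset.mem_of_mem_erase hzmem)
      have hzmn : z ≠ mn := Finset.ne_of_mem_erase hzmem
      apply Finset.mem_image_of_mem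
      rw [Finset.mem_filter]
      refine ⟨hzT, mn, pick_mem hTne, ?_⟩
      exact lt_of_le_of_ne (pick_le hTne hzT) (Ne.symm hzmn)
  -- cardinalities
  have hT3Fcard : T3F.card = (Fintype.card C).choose 3 * 2 := by
    rw [hT3F, Finset.card_product, Finset.card_powersetCard, Finset.card_univ]
    simp
  have hT4Fcard : T4F.card = 3 * (Fintype.card C).choose 4 := by
    have hdisjU : ∀ U ∈ (Finset.univ : Finset C).powersetCard 4,
        ∀ U' ∈ (Finset.univ : Finset C).powersetCard 4,
        U ≠ U' → Disjoint ((U.filter (fun z => ∃ y ∈ U, y < z)).image (fun z => (U, z)))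
          ((U'.filter (fun z => ∃ y ∈ U', y < z)).image (fun z => (U', z))) := by
      intro U hU U' hU' hne
      rw [Finset.disjoint_left]
      intro p hp hp'
      obtain ⟨w, _, hw⟩ := Finset.mem_image.mp hp
      obtain ⟨w', _, hw'⟩ := Finset.mem_image.mp hp'
      apply hne
      rw [← hw] at hw'
      have := (Prod.mk.injEq _ _ _ _).mp hw'
      rw [this.1]
    rw [hT4F]
    rw [Finset.card_biUnion hdisjU]
    have hterm : ∀ U ∈ (Finset.univ : Finset C).powersetCard 4,
          ((U.filter (fun z => ∃ y ∈ U, y < z)).image (fun z => (U, z))).card = 3 := by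
        intro U hU
        have hUcard : U.card = 4 := Finset.mem_powersetCard_univ.mp hU
        have hUne : U.Nonempty := by
          rw [← Finset.card_pos, hUcard]; norm_num
        rw [Finset.card_image_of_injective _ (fun z z' h => (Prod.mk.injEq _ _ _ _).mp h |>.2)]
        have hfe : U.filter (fun z => ∃ y ∈ U, y < z) = U.erase (pick U) := by
          ext w
          rw [Finset.mem_filter, Finset.mem_erase]
          constructor
          · rintro ⟨hwU, y, hyU, hyw⟩
            refine ⟨?_, hwU⟩
            intro he
            have := pick_le hUne hyU
            rw [← he] at this
            exact absurd hyw (not_lt.mpr this)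
          · rintro ⟨hne, hwU⟩
            exact ⟨hwU, pick U, pick_mem hUne,
              lt_of_le_of_ne (pick_le hUne hwU) (Ne.symm hne)⟩
        rw [hfe, Finset.card_erase_of_mem (pick_mem hUne), hUcard]
    rw [Finset.sum_congr rfl hterm, Finset.sum_const, smul_eq_mul,
      Finset.card_powersetCard, Finset.card_univ]
    ring
  have hTOKFcard : TOKF.card ≤ 2 * (Fintype.card C).choose 3 + 3 * (Fintype.card C).choose 4 := by
    rw [hTOKF]
    calc (T3F.image Sum.inl ∪ T4F.image Sum.inr).card
        ≤ (T3F.image Sum.inl).card + (T4F.image Sum.inr).card := Finset.card_union_le _ _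
      _ ≤ T3F.card + T4F.card :=
          Nat.add_le_add Finset.card_image_le Finset.card_image_le
      _ = 2 * (Fintype.card C).choose 3 + 3 * (Fintype.card C).choose 4 := by
          rw [hT3Fcard, hT4Fcard]; ring
  -- put it together
  calc A.ncard = (tok '' A).ncard := (Set.ncard_image_of_injOn hinj).symm
    _ ≤ (↑TOKF : Set ((Finset C × Bool) ⊕ (Finset C × C))).ncard := by
        apply Set.ncard_le_ncard
        · rintro ω ⟨σ, hσ, rfl⟩
          exact himg σ hσ
        · exact TOKF.finite_toSet
    _ = TOKF.card := Set.ncard_coe_finset TOKF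
    _ ≤ 2 * (Fintype.card C).choose 3 + 3 * (Fintype.card C).choose 4 := hTOKFcard

end WithC

lemma choose2_int : ∀ n : ℕ, ((n.choose 2 : ℤ)) * 2 = n * (n - 1) := by
  intro n
  induction n with
  | zero => norm_num
  | succ k IH =>
    rw [Nat.choose_succ_succ]
    push_cast
    rw [Nat.choose_one_right]
    push_cast
    linear_combination IH

lemma choose3_int : ∀ n : ℕ, ((n.choose 3 : ℤ)) * 6 = n * (n - 1) * (n - 2) := by
  intro n
  induction n with
  | zero => norm_num
  | succ k IH =>
    rw [Nat.choose_succ_succ]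
    push_cast
    linear_combination 3 * choose2_int k + IH

lemma choose4_int : ∀ n : ℕ, ((n.choose 4 : ℤ)) * 24 = n * (n - 1) * (n - 2) * (n - 3) := by
  intro n
  induction n with
  | zero => norm_num
  | succ k IH =>
    rw [Nat.choose_succ_succ]
    push_cast
    linear_combination 4 * choose3_int k + IH

lemma main_identity (n : ℕ) :
    (n : ℤ) * (3 * n - 10) * (n + 1) * (n - 1)
      = 24 * (2 * (n.choose 3 : ℤ) + 3 * (n.choose 4 : ℤ) - (n.choose 2 : ℤ)) := by
  linear_combination (-8) * choose3_int n + (-3) * choose4_int n + 12 * choose2_int n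

end S8

open S8 in
/-- for an embedding of `m` candidates in the plane, the number of linear
orders with nonempty region is at most `m(3m−10)(m+1)(m−1)/24 + m(m−1) + 1`. -/
theorem stmt_8 {C : Type*} [Fintype C] (γ : C → Plane) (hγ : Function.Injective γ) :
    (Set.ncard {σ : C ≃ Fin (Fintype.card C) | (region γ σ).Nonempty} : ℤ) ≤
      (Fintype.card C : ℤ) * (3 * (Fintype.card C : ℤ) - 10) * ((Fintype.card C : ℤ) + 1)
          * ((Fintype.card C : ℤ) - 1) / 24
        + (Fintype.card C : ℤ) * ((Fintype.card C : ℤ) - 1) + 1 := by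
  classical
  by_cases hm : Fintype.card C ≤ 1
  · -- trivial case
    have hsub : ({σ : C ≃ Fin (Fintype.card C) | (region γ σ).Nonempty}).ncard ≤ 1 := by
      haveI : Subsingleton (Fin (Fintype.card C)) := by
        rcases Nat.le_one_iff_eq_zero_or_eq_one.mp hm with h | h <;> rw [h] <;> infer_instance
      have huniq : ∀ σ σ' : C ≃ Fin (Fintype.card C), σ = σ' := fun σ σ' =>
        Equiv.ext fun a => Subsingleton.elim _ _
      rcases Set.eq_empty_or_nonempty
        {σ : C ≃ Fin (Fintype.card C) | (region γ σ).Nonempty} with h | ⟨σ₀, h₀⟩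
      · rw [h]; simp
      · have : {σ : C ≃ Fin (Fintype.card C) | (region γ σ).Nonempty} = {σ₀} :=
          Set.eq_singleton_iff_unique_mem.mpr ⟨h₀, fun x _ => huniq x σ₀⟩
        rw [this, Set.ncard_singleton]
    have h1 : (Set.ncard {σ : C ≃ Fin (Fintype.card C) | (region γ σ).Nonempty} : ℤ) ≤ 1 := by
      exact_mod_cast hsub
    have h2 : (1 : ℤ) ≤ (Fintype.card C : ℤ) * (3 * (Fintype.card C : ℤ) - 10)
        * ((Fintype.card C : ℤ) + 1) * ((Fintype.card C : ℤ) - 1) / 24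
        + (Fintype.card C : ℤ) * ((Fintype.card C : ℤ) - 1) + 1 := by
      rcases Nat.le_one_iff_eq_zero_or_eq_one.mp hm with h | h <;> rw [h] <;> norm_num
    linarith
  · push_neg at hm
    haveI hCne : Nonempty C := by
      rw [← Fintype.card_pos_iff]; omega
    letI : LinearOrder C := LinearOrder.lift' (Fintype.equivFin C) (Equiv.injective _)
    obtain ⟨u, hu, hgen⟩ := exists_generic γ hγ
    have hgen' : ∀ a b : C, a ≠ b → alf γ u a b ≠ 0 := hgen
    set S := {σ : C ≃ Fin (Fintype.card C) | (region γ σ).Nonempty} with hS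
    set A := {σ : C ≃ Fin (Fintype.card C) | (region γ σ).Nonempty ∧
        ∃ y₀ : ℝ, ∀ p ∈ region γ σ, y₀ ≤ psi u p} with hA
    set B := {σ : C ≃ Fin (Fintype.card C) | (region γ σ).Nonempty ∧
        ¬∃ y₀ : ℝ, ∀ p ∈ region γ σ, y₀ ≤ psi u p} with hB
    have hsplit : S ⊆ A ∪ B := by
      intro σ hσ
      by_cases h : ∃ y₀ : ℝ, ∀ p ∈ region γ σ, y₀ ≤ psi u p
      · exact Or.inl ⟨hσ, h⟩
      · exact Or.inr ⟨hσ, h⟩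
    have hcount : S.ncard ≤ A.ncard + B.ncard :=
      le_trans (Set.ncard_le_ncard hsplit ((A ∪ B).toFinite)) (Set.ncard_union_le A B)
    have hcA := countA γ (m := Fintype.card C) hγ hu hgen'
    have hcB := countB γ (m := Fintype.card C) hγ hu hgen'
    rw [← hA] at hcA
    rw [← hB] at hcB
    have htotal : S.ncard ≤ 2 * (Fintype.card C).choose 3 + 3 * (Fintype.card C).choose 4
        + ((Fintype.card C).choose 2 + 1) := by
      omega
    -- arithmetic
    have hdiv : (Fintype.card C : ℤ) * (3 * (Fintype.card C : ℤ) - 10)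
          * ((Fintype.card C : ℤ) + 1) * ((Fintype.card C : ℤ) - 1) / 24
        = 2 * ((Fintype.card C).choose 3 : ℤ) + 3 * ((Fintype.card C).choose 4 : ℤ)
          - ((Fintype.card C).choose 2 : ℤ) := by
      rw [main_identity (Fintype.card C)]
      exact Int.mul_ediv_cancel_left _ (by norm_num)
    have h2 : (Fintype.card C : ℤ) * ((Fintype.card C : ℤ) - 1)
        = 2 * ((Fintype.card C).choose 2 : ℤ) := by
      have := choose2_int (Fintype.card C)
      linarith
    rw [hdiv, h2]
    have hcast : (S.ncard : ℤ) ≤ 2 * ((Fintype.card C).choose 3 : ℤ)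
        + 3 * ((Fintype.card C).choose 4 : ℤ)
        + (((Fintype.card C).choose 2 : ℤ) + 1) := by exact_mod_cast htotal
    linarith
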